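/- arXiv:1612.05295 — 4 statements merged into one kernel-verified Lean document; each statement's English description precedes it below -/
import Mathlib

section
/- For every n ≥ 1, M(n) equals the number of subsets of {1,...,n} whose elements sum to ⌊n(n+1)/4⌋; that is, the maximum over K of the number of subsets of {1,...,n} with sum K is attained at K = ⌊n(n+1)/4⌋. -/
open Finset

namespace SubsetSum




/-- ambient set of subsets -/
def B (n : ℕ) : Finset (Finset ℕ) := (Finset.Icc 1 n).powerset

/-- coefficient of the lowering move of type `a` (`a = 0` : remove `1`;
`a ≥ 1` : move `a+1` down to `a`). -/
def c (n a : ℕ) : ℚ :=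
  if a = 0 then (n : ℚ) * (n + 1) else 2 * ((n : ℚ) * (n + 1)) - 2 * ((a : ℚ) * (a + 1))

lemma c_pos (n a : ℕ) (hn : 1 ≤ n) (ha : a < n) : 0 < c n a := by
  unfold c
  split_ifs with h
  · positivity
  · have h1 : (a : ℚ) < n := by exact_mod_cast ha
    have h2 : (a : ℚ) + 1 ≤ n := by exact_mod_cast ha
    have h0 : (0:ℚ) ≤ a := by positivity
    nlinarith

/-- weight of an element `j` -/
def om (n j : ℕ) : ℚ := c n 0 * ∏ a ∈ Finset.Ico 1 j, c n a

lemma om_pos (n j : ℕ) (hn : 1 ≤ n) (hj : j ≤ n) : 0 < om n j := by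
  unfold om
  apply mul_pos (c_pos n 0 hn hn)
  apply Finset.prod_pos
  intro a ha
  simp only [Finset.mem_Ico] at ha
  exact c_pos n a hn (lt_of_lt_of_le ha.2 hj)

lemma om_succ (n a : ℕ) (ha : 1 ≤ a) : om n (a + 1) = om n a * c n a := by
  unfold om
  rw [Finset.prod_Ico_succ_top ha, mul_assoc]

/-- weight of a subset -/
def w (n : ℕ) (S : Finset ℕ) : ℚ := ∏ j ∈ S, om n j

lemma w_pos (n : ℕ) (hn : 1 ≤ n) {S : Finset ℕ} (hS : S ∈ B n) : 0 < w n S := by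
  apply Finset.prod_pos
  intro j hj
  have := Finset.mem_powerset.mp hS hj
  simp only [Finset.mem_Icc] at this
  exact om_pos n j hn this.2

lemma w_insert (n : ℕ) (x : ℕ) (S : Finset ℕ) (hx : x ∉ S) :
    w n (insert x S) = om n x * w n S := Finset.prod_insert hx






/-- raising operator of type `a ≥ 1`: moves `a` up to `a+1`. As a matrix-on-functions:
`(Xa a f) U = f (U with a+1 replaced by a)` when `a+1 ∈ U, a ∉ U`. -/
def Xa (a : ℕ) (f : Finset ℕ → ℚ) : Finset ℕ → ℚ := fun U =>
  if a + 1 ∈ U ∧ a ∉ U then f (insert a (U.erase (a + 1))) else 0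

/-- raising operator of type `0`: inserts `1`. -/
def X0 (f : Finset ℕ → ℚ) : Finset ℕ → ℚ := fun U =>
  if 1 ∈ U then f (U.erase 1) else 0

/-- lowering operator of type `a ≥ 1`. -/
def Ya (n a : ℕ) (g : Finset ℕ → ℚ) : Finset ℕ → ℚ := fun S =>
  if a ∈ S ∧ a + 1 ∉ S then c n a * g (insert (a + 1) (S.erase a)) else 0

/-- lowering operator of type `0`. -/
def Y0 (n : ℕ) (g : Finset ℕ → ℚ) : Finset ℕ → ℚ := fun S =>
  if 1 ∉ S then c n 0 * g (insert 1 S) else 0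

/-- full raising operator -/
def XX (n : ℕ) (f : Finset ℕ → ℚ) : Finset ℕ → ℚ := fun U =>
  X0 f U + ∑ a ∈ Finset.Ico 1 n, Xa a f U

/-- full lowering operator -/
def YY (n : ℕ) (g : Finset ℕ → ℚ) : Finset ℕ → ℚ := fun S =>
  Y0 n g S + ∑ a ∈ Finset.Ico 1 n, Ya n a g S

/-! ### diagonal commutators -/

lemma diag0 (n : ℕ) (f : Finset ℕ → ℚ) (S : Finset ℕ) :
    Y0 n (X0 f) S - X0 (Y0 n f) S =
      ((if 1 ∉ S then (1:ℚ) else 0) - (if 1 ∈ S then 1 else 0)) * c n 0 * f S := by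
  unfold X0 Y0
  by_cases h : 1 ∈ S
  · simp [h, Finset.insert_erase h]
  · simp [h, Finset.erase_insert h]

lemma diagA (n a : ℕ) (ha : 1 ≤ a) (f : Finset ℕ → ℚ) (S : Finset ℕ) :
    Ya n a (Xa a f) S - Xa a (Ya n a f) S =
      ((if a ∈ S then (1:ℚ) else 0) - (if a + 1 ∈ S then 1 else 0)) * c n a * f S := by
  have hne : a ≠ a + 1 := by omega
  unfold Xa Ya
  by_cases h1 : a ∈ S <;> by_cases h2 : a + 1 ∈ S
  · simp [h1, h2]
  · have e1 : (insert (a+1) (S.erase a)).erase (a+1) = S.erase a :=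
      Finset.erase_insert (by simp [h2])
    have e2 : insert a (S.erase a) = S := Finset.insert_erase h1
    simp [h1, h2, e1, e2]
  · have e1 : (insert a (S.erase (a+1))).erase a = S.erase (a+1) :=
      Finset.erase_insert (by simp [h1])
    have e2 : insert (a+1) (S.erase (a+1)) = S := Finset.insert_erase h2
    simp [h1, h2, e1, e2, hne]
  · simp [h1, h2]












lemma crossA (n a b : ℕ) (ha : 1 ≤ a) (hb : 1 ≤ b) (hab : a ≠ b)
    (f : Finset ℕ → ℚ) (S : Finset ℕ) :
    Ya n b (Xa a f) S = Xa a (Ya n b f) S := by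
  simp only [Xa, Ya]
  rcases eq_or_ne b (a + 1) with rfl | hba
  · simp only [Finset.mem_insert, Finset.mem_erase]
    split_ifs <;> first | rfl | (simp_all; try omega)
  · rcases eq_or_ne a (b + 1) with rfl | hab2
    · simp only [Finset.mem_insert, Finset.mem_erase]
      split_ifs <;> first | rfl | (simp_all; try omega)
    · have n1 : a + 1 ≠ b + 1 := by omega
      have n2 : a + 1 ≠ b := by omega
      have n3 : a ≠ b + 1 := hab2
      have n4 : b ≠ a + 1 := hba
      have n5 : b ≠ a := hab.symm
      have n6 : b + 1 ≠ a := fun h => hab2 h.symm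
      have q1 : a + 1 ∈ insert (b + 1) (S.erase b) ↔ a + 1 ∈ S := by
        simp [Finset.mem_insert, Finset.mem_erase, n1, n2, hab]
      have q2 : a ∈ insert (b + 1) (S.erase b) ↔ a ∈ S := by
        simp [Finset.mem_insert, Finset.mem_erase, n3, hab]
      have q3 : b ∈ insert a (S.erase (a + 1)) ↔ b ∈ S := by
        simp [Finset.mem_insert, Finset.mem_erase, n4, n5]
      have q4 : b + 1 ∈ insert a (S.erase (a + 1)) ↔ b + 1 ∈ S := by
        simp [Finset.mem_insert, Finset.mem_erase, n1.symm, n6, n5]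
      simp only [q1, q2, q3, q4]
      split_ifs with h1 h2 h3 h4 h5 <;> try (simp_all; done)
      · congr 2
        ext x
        simp only [Finset.mem_insert, Finset.mem_erase]
        by_cases hx : x ∈ S <;> simp [hx] <;> omega
      all_goals (exfalso; tauto)

lemma crossX0 (n b : ℕ) (hb : 1 ≤ b) (f : Finset ℕ → ℚ) (S : Finset ℕ) :
    Ya n b (X0 f) S = X0 (Ya n b f) S := by
  simp only [Xa, Ya, X0]
  rcases eq_or_ne b 1 with rfl | hb1
  · simp only [Finset.mem_insert, Finset.mem_erase]
    split_ifs <;> first | rfl | (simp_all; try omega)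
  · have n1 : (1:ℕ) ≠ b + 1 := by omega
    have n2 : (1:ℕ) ≠ b := fun h => hb1 h.symm
    have n3 : b ≠ 1 := hb1
    have n4 : b + 1 ≠ 1 := by omega
    have q1 : (1:ℕ) ∈ insert (b + 1) (S.erase b) ↔ 1 ∈ S := by
      simp [Finset.mem_insert, Finset.mem_erase, n1, n2]
      intro h; omega
    have q2 : b ∈ S.erase 1 ↔ b ∈ S := by
      simp [Finset.mem_erase, n3]
    have q3 : b + 1 ∈ S.erase 1 ↔ b + 1 ∈ S := by
      simp [Finset.mem_erase, n4]
      intro _ h; omega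
    simp only [q1, q2, q3]
    split_ifs with h1 h2 h3 h4 <;> try (simp_all; done)
    · congr 2
      ext x
      simp only [Finset.mem_insert, Finset.mem_erase]
      by_cases hx : x ∈ S <;> simp [hx] <;> omega
    all_goals (exfalso; tauto)

lemma crossY0 (n a : ℕ) (ha : 1 ≤ a) (f : Finset ℕ → ℚ) (S : Finset ℕ) :
    Y0 n (Xa a f) S = Xa a (Y0 n f) S := by
  simp only [Xa, Y0]
  rcases eq_or_ne a 1 with rfl | ha1
  · simp only [Finset.mem_insert, Finset.mem_erase]
    split_ifs <;> first | rfl | (simp_all; try omega)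
  · have n1 : a + 1 ≠ 1 := by omega
    have n2 : a ≠ 1 := ha1
    have n3 : (1:ℕ) ≠ a := fun h => ha1 h.symm
    have n4 : (1:ℕ) ≠ a + 1 := fun h => n1 h.symm
    have q1 : a + 1 ∈ insert 1 S ↔ a + 1 ∈ S := by
      simp [Finset.mem_insert, n1]
      intro h; omega
    have q2 : a ∈ insert 1 S ↔ a ∈ S := by
      simp [Finset.mem_insert, n2]
    have q3 : (1:ℕ) ∈ insert a (S.erase (a + 1)) ↔ 1 ∈ S := by
      simp [Finset.mem_insert, Finset.mem_erase, n3, n4]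
      intro _ h; omega
    simp only [q1, q2, q3]
    split_ifs with h1 h2 h3 h4 <;> try (simp_all; done)
    · congr 2
      ext x
      simp only [Finset.mem_insert, Finset.mem_erase]
      by_cases hx : x ∈ S <;> simp [hx] <;> omega
    all_goals (exfalso; tauto)




lemma key (n : ℕ) (hn : 1 ≤ n) (j : ℕ) (h1 : 1 ≤ j) (h2 : j ≤ n) :
    (if j = n then 0 else c n j) - (if j = 1 then 0 else c n (j - 1))
      - (if j = 1 then 2 * ((n:ℚ) * (n + 1)) else 0) = -4 * (j : ℚ) := by
  by_cases hj1 : j = 1 <;> by_cases hjn : j = n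
  · -- j = 1 = n
    subst hj1
    have hn1 : n = 1 := by omega
    subst hn1
    norm_num
  · -- j = 1 < n
    subst hj1
    have h3 : (1:ℕ) ≠ 0 := one_ne_zero
    simp only [c, hjn, if_false, if_true, h3, eq_self_iff_true]
    norm_num
  · -- 1 < j = n
    subst hjn
    have h3 : ¬ (j - 1 = 0) := by omega
    have h4 : ((j - 1 : ℕ) : ℚ) = (j : ℚ) - 1 := by
      push_cast [Nat.cast_sub h1]; ring
    simp only [c, hj1, h3, h4, eq_self_iff_true, if_true, if_false]
    ring
  · -- 1 < j < n
    have h3 : ¬ (j = 0) := by omega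
    have h5 : ¬ (j - 1 = 0) := by omega
    have h4 : ((j - 1 : ℕ) : ℚ) = (j : ℚ) - 1 := by
      push_cast [Nat.cast_sub h1]; ring
    simp only [c, hjn, hj1, h3, h5, h4, if_false]
    ring






lemma sumA (n : ℕ) (S : Finset ℕ)
    (hSn : ∀ j ∈ S, 1 ≤ j ∧ j ≤ n) :
    (∑ a ∈ Finset.Ico 1 n, (if a ∈ S then c n a else 0))
      = ∑ j ∈ S, (if j = n then 0 else c n j) := by
  rw [Finset.sum_ite_mem]
  have h1 : Finset.Ico 1 n ∩ S = S.erase n := by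
    ext x
    simp only [Finset.mem_inter, Finset.mem_Ico, Finset.mem_erase]
    constructor
    · rintro ⟨⟨_, hx⟩, hxS⟩; exact ⟨by omega, hxS⟩
    · rintro ⟨hxn, hxS⟩
      have := hSn x hxS
      exact ⟨⟨this.1, by omega⟩, hxS⟩
  rw [h1, ← Finset.sum_erase (a := n) S (f := fun j => if j = n then 0 else c n j) (by simp)]
  apply Finset.sum_congr rfl
  intro x hx
  simp [Finset.mem_erase.mp hx |>.1]

lemma sumB (n : ℕ) (S : Finset ℕ) (hSn : ∀ j ∈ S, 1 ≤ j ∧ j ≤ n) :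
    (∑ a ∈ Finset.Ico 1 n, (if a + 1 ∈ S then c n a else 0))
      = ∑ j ∈ S, (if j = 1 then 0 else c n (j - 1)) := by
  have e : ∑ a ∈ Finset.Ico 1 n, (if a + 1 ∈ S then c n a else 0)
      = ∑ b ∈ Finset.Ico 2 (n + 1), (if b ∈ S then c n (b - 1) else 0) := by
    rw [← Finset.map_add_right_Ico 1 n 1]
    rw [Finset.sum_map]
    apply Finset.sum_congr rfl
    intro a _
    simp [addRightEmbedding]
  rw [e, Finset.sum_ite_mem]
  have h1 : Finset.Ico 2 (n + 1) ∩ S = S.erase 1 := by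
    ext x
    simp only [Finset.mem_inter, Finset.mem_Ico, Finset.mem_erase]
    constructor
    · rintro ⟨⟨h2, _⟩, hxS⟩; exact ⟨by omega, hxS⟩
    · rintro ⟨hx1, hxS⟩
      have := hSn x hxS
      exact ⟨⟨by omega, by omega⟩, hxS⟩
  rw [h1, ← Finset.sum_erase (a := 1) S (f := fun j => if j = 1 then 0 else c n (j - 1)) (by simp)]
  apply Finset.sum_congr rfl
  intro x hx
  simp [Finset.mem_erase.mp hx |>.1]
lemma telescope (n : ℕ) (hn : 1 ≤ n) (S : Finset ℕ) (hS : S ∈ B n) :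
    (((if 1 ∉ S then (1:ℚ) else 0) - (if 1 ∈ S then 1 else 0)) * c n 0)
      + ∑ a ∈ Finset.Ico 1 n,
        (((if a ∈ S then (1:ℚ) else 0) - (if a + 1 ∈ S then 1 else 0)) * c n a)
    = (n : ℚ) * (n + 1) - 4 * (S.sum id : ℕ) := by
  have hSn : ∀ j ∈ S, 1 ≤ j ∧ j ≤ n := by
    intro j hj
    have := Finset.mem_powerset.mp hS hj
    simpa using this
  have e1 : ∑ a ∈ Finset.Ico 1 n,
      (((if a ∈ S then (1:ℚ) else 0) - (if a + 1 ∈ S then 1 else 0)) * c n a)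
      = (∑ a ∈ Finset.Ico 1 n, (if a ∈ S then c n a else 0))
        - ∑ a ∈ Finset.Ico 1 n, (if a + 1 ∈ S then c n a else 0) := by
    rw [← Finset.sum_sub_distrib]
    apply Finset.sum_congr rfl
    intro a _
    split_ifs <;> ring
  have e2 : ((if 1 ∉ S then (1:ℚ) else 0) - (if 1 ∈ S then 1 else 0)) * c n 0
      = (n : ℚ) * (n + 1) - ∑ j ∈ S, (if j = 1 then 2 * ((n:ℚ) * (n + 1)) else 0) := by
    rw [Finset.sum_ite_eq' S 1 (fun _ => 2 * ((n:ℚ) * (n + 1)))]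
    have hc0 : c n 0 = (n : ℚ) * (n + 1) := by simp [c]
    rw [hc0]
    by_cases h : 1 ∈ S <;> simp [h] <;> ring
  rw [e1, e2, sumA n S hSn, sumB n S hSn]
  have e3 : ((S.sum id : ℕ) : ℚ) = ∑ j ∈ S, (j : ℚ) := by
    push_cast
    rfl
  rw [e3]
  have e4 : (n : ℚ) * (n + 1) - ∑ j ∈ S, (if j = 1 then 2 * ((n:ℚ) * (n + 1)) else 0)
      + ((∑ j ∈ S, (if j = n then 0 else c n j)) - ∑ j ∈ S, (if j = 1 then 0 else c n (j - 1)))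
      = (n : ℚ) * (n + 1)
        + ∑ j ∈ S, ((if j = n then 0 else c n j) - (if j = 1 then 0 else c n (j - 1))
            - (if j = 1 then 2 * ((n:ℚ) * (n + 1)) else 0)) := by
    rw [Finset.sum_sub_distrib, Finset.sum_sub_distrib]
    ring
  rw [e4]
  have e5 : ∑ j ∈ S, ((if j = n then 0 else c n j) - (if j = 1 then 0 else c n (j - 1))
      - (if j = 1 then 2 * ((n:ℚ) * (n + 1)) else 0)) = ∑ j ∈ S, (-4 * (j:ℚ)) := by
    apply Finset.sum_congr rfl
    intro j hj
    exact key n hn j (hSn j hj).1 (hSn j hj).2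
  rw [e5, ← Finset.mul_sum]
  ring

/-! ### linearity of the local operators in the function argument -/

lemma X0_add (p q : Finset ℕ → ℚ) (S : Finset ℕ) :
    X0 (fun U => p U + q U) S = X0 p S + X0 q S := by
  unfold X0; split_ifs <;> simp

lemma Xa_add (a : ℕ) (p q : Finset ℕ → ℚ) (S : Finset ℕ) :
    Xa a (fun U => p U + q U) S = Xa a p S + Xa a q S := by
  unfold Xa; split_ifs <;> simp

lemma Y0_add (n : ℕ) (p q : Finset ℕ → ℚ) (S : Finset ℕ) :
    Y0 n (fun U => p U + q U) S = Y0 n p S + Y0 n q S := by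
  unfold Y0; split_ifs <;> ring

lemma Ya_add (n a : ℕ) (p q : Finset ℕ → ℚ) (S : Finset ℕ) :
    Ya n a (fun U => p U + q U) S = Ya n a p S + Ya n a q S := by
  unfold Ya; split_ifs <;> ring

lemma X0_sum (t : Finset ℕ) (F : ℕ → Finset ℕ → ℚ) (S : Finset ℕ) :
    X0 (fun U => ∑ a ∈ t, F a U) S = ∑ a ∈ t, X0 (F a) S := by
  unfold X0; split_ifs <;> simp

lemma Xa_sum (b : ℕ) (t : Finset ℕ) (F : ℕ → Finset ℕ → ℚ) (S : Finset ℕ) :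
    Xa b (fun U => ∑ a ∈ t, F a U) S = ∑ a ∈ t, Xa b (F a) S := by
  unfold Xa; split_ifs <;> simp

lemma Y0_sum (n : ℕ) (t : Finset ℕ) (F : ℕ → Finset ℕ → ℚ) (S : Finset ℕ) :
    Y0 n (fun U => ∑ a ∈ t, F a U) S = ∑ a ∈ t, Y0 n (F a) S := by
  unfold Y0; split_ifs <;> simp [Finset.mul_sum]

lemma Ya_sum (n b : ℕ) (t : Finset ℕ) (F : ℕ → Finset ℕ → ℚ) (S : Finset ℕ) :
    Ya n b (fun U => ∑ a ∈ t, F a U) S = ∑ a ∈ t, Ya n b (F a) S := by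
  unfold Ya; split_ifs <;> simp [Finset.mul_sum]

/-! ### the commutator identity -/

lemma commutator (n : ℕ) (hn : 1 ≤ n) (f : Finset ℕ → ℚ) (S : Finset ℕ) (hS : S ∈ B n) :
    YY n (XX n f) S - XX n (YY n f) S
      = ((n : ℚ) * (n + 1) - 4 * (S.sum id : ℕ)) * f S := by
  have hy : YY n (XX n f) S
      = Y0 n (X0 f) S + ∑ a ∈ Finset.Ico 1 n, Y0 n (Xa a f) S
        + (∑ b ∈ Finset.Ico 1 n, Ya n b (X0 f) S
          + ∑ b ∈ Finset.Ico 1 n, ∑ a ∈ Finset.Ico 1 n, Ya n b (Xa a f) S) := by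
    unfold YY XX
    rw [Y0_add, Y0_sum]
    congr 1
    rw [← Finset.sum_add_distrib]
    apply Finset.sum_congr rfl
    intro b _
    rw [Ya_add, Ya_sum]
  have hx : XX n (YY n f) S
      = X0 (Y0 n f) S + ∑ b ∈ Finset.Ico 1 n, X0 (Ya n b f) S
        + (∑ a ∈ Finset.Ico 1 n, Xa a (Y0 n f) S
          + ∑ a ∈ Finset.Ico 1 n, ∑ b ∈ Finset.Ico 1 n, Xa a (Ya n b f) S) := by
    unfold YY XX
    rw [X0_add, X0_sum]
    congr 1
    rw [← Finset.sum_add_distrib]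
    apply Finset.sum_congr rfl
    intro a _
    rw [Xa_add, Xa_sum]
  rw [hy, hx]
  have c1 : ∑ a ∈ Finset.Ico 1 n, Y0 n (Xa a f) S
      = ∑ a ∈ Finset.Ico 1 n, Xa a (Y0 n f) S := by
    apply Finset.sum_congr rfl
    intro a haa
    exact crossY0 n a (Finset.mem_Ico.mp haa).1 f S
  have c2 : ∑ b ∈ Finset.Ico 1 n, Ya n b (X0 f) S
      = ∑ b ∈ Finset.Ico 1 n, X0 (Ya n b f) S := by
    apply Finset.sum_congr rfl
    intro b hbb
    exact crossX0 n b (Finset.mem_Ico.mp hbb).1 f S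
  have c3 : ∑ b ∈ Finset.Ico 1 n, ∑ a ∈ Finset.Ico 1 n, Ya n b (Xa a f) S
      - ∑ a ∈ Finset.Ico 1 n, ∑ b ∈ Finset.Ico 1 n, Xa a (Ya n b f) S
      = ∑ a ∈ Finset.Ico 1 n,
          (((if a ∈ S then (1:ℚ) else 0) - (if a + 1 ∈ S then 1 else 0)) * c n a) * f S := by
    rw [Finset.sum_comm]
    rw [← Finset.sum_sub_distrib]
    apply Finset.sum_congr rfl
    intro a haa
    rw [← Finset.sum_sub_distrib]
    have ha1 : 1 ≤ a := (Finset.mem_Ico.mp haa).1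
    rw [Finset.sum_eq_single_of_mem a haa]
    · rw [diagA n a ha1 f S]
    · intro b hbb hba
      rw [crossA n a b ha1 (Finset.mem_Ico.mp hbb).1 (fun h => hba h.symm) f S]
      ring
  have final := telescope n hn S hS
  calc Y0 n (X0 f) S + ∑ a ∈ Finset.Ico 1 n, Y0 n (Xa a f) S
        + (∑ b ∈ Finset.Ico 1 n, Ya n b (X0 f) S
          + ∑ b ∈ Finset.Ico 1 n, ∑ a ∈ Finset.Ico 1 n, Ya n b (Xa a f) S)
      - (X0 (Y0 n f) S + ∑ b ∈ Finset.Ico 1 n, X0 (Ya n b f) S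
        + (∑ a ∈ Finset.Ico 1 n, Xa a (Y0 n f) S
          + ∑ a ∈ Finset.Ico 1 n, ∑ b ∈ Finset.Ico 1 n, Xa a (Ya n b f) S))
      = (Y0 n (X0 f) S - X0 (Y0 n f) S)
        + ((∑ a ∈ Finset.Ico 1 n, Y0 n (Xa a f) S) - ∑ a ∈ Finset.Ico 1 n, Xa a (Y0 n f) S)
        + ((∑ b ∈ Finset.Ico 1 n, Ya n b (X0 f) S) - ∑ b ∈ Finset.Ico 1 n, X0 (Ya n b f) S)
        + ((∑ b ∈ Finset.Ico 1 n, ∑ a ∈ Finset.Ico 1 n, Ya n b (Xa a f) S)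
          - ∑ a ∈ Finset.Ico 1 n, ∑ b ∈ Finset.Ico 1 n, Xa a (Ya n b f) S) := by ring
    _ = (((if 1 ∉ S then (1:ℚ) else 0) - (if 1 ∈ S then 1 else 0)) * c n 0) * f S
        + 0 + 0
        + ∑ a ∈ Finset.Ico 1 n,
            (((if a ∈ S then (1:ℚ) else 0) - (if a + 1 ∈ S then 1 else 0)) * c n a) * f S := by
      rw [diag0, c1, c2, c3]
      ring
    _ = ((((if 1 ∉ S then (1:ℚ) else 0) - (if 1 ∈ S then 1 else 0)) * c n 0)
          + ∑ a ∈ Finset.Ico 1 n,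
              (((if a ∈ S then (1:ℚ) else 0) - (if a + 1 ∈ S then 1 else 0)) * c n a)) * f S := by
      rw [add_mul, Finset.sum_mul]
      ring
    _ = ((n : ℚ) * (n + 1) - 4 * (S.sum id : ℕ)) * f S := by rw [final]

/-! ### inner product and adjointness -/

def ip (n : ℕ) (f g : Finset ℕ → ℚ) : ℚ := ∑ S ∈ B n, w n S * f S * g S

lemma ip_comm (n : ℕ) (f g : Finset ℕ → ℚ) : ip n f g = ip n g f := by
  unfold ip
  apply Finset.sum_congr rfl
  intro S _
  ring

lemma adj0 (n : ℕ) (hn : 1 ≤ n) (f g : Finset ℕ → ℚ) :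
    ∑ U ∈ B n, w n U * X0 f U * g U = ∑ S ∈ B n, w n S * f S * Y0 n g S := by
  have l : ∑ U ∈ B n, w n U * X0 f U * g U
      = ∑ U ∈ (B n).filter (fun U => 1 ∈ U), w n U * f (U.erase 1) * g U := by
    rw [Finset.sum_filter]
    apply Finset.sum_congr rfl
    intro U _
    unfold X0
    split_ifs <;> ring
  have r : ∑ S ∈ B n, w n S * f S * Y0 n g S
      = ∑ S ∈ (B n).filter (fun S => 1 ∉ S), w n S * f S * (c n 0 * g (insert 1 S)) := by
    rw [Finset.sum_filter]
    apply Finset.sum_congr rfl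
    intro S _
    unfold Y0
    split_ifs <;> ring
  rw [l, r]
  apply Finset.sum_nbij' (fun U => U.erase 1) (fun S => insert 1 S)
  · intro U hU
    simp only [Finset.mem_filter, B, Finset.mem_powerset] at hU ⊢
    exact ⟨fun x hx => hU.1 (Finset.mem_of_mem_erase hx), by simp⟩
  · intro S hS
    simp only [Finset.mem_filter, B, Finset.mem_powerset] at hS ⊢
    constructor
    · intro x hx
      rcases Finset.mem_insert.mp hx with rfl | hx
      · simp only [Finset.mem_Icc]; omega
      · exact hS.1 hx
    · simp
  · intro U hU
    simp only [Finset.mem_filter] at hU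
    exact Finset.insert_erase hU.2
  · intro S hS
    simp only [Finset.mem_filter] at hS
    exact Finset.erase_insert hS.2
  · intro U hU
    simp only [Finset.mem_filter] at hU
    have h1 : insert 1 (U.erase 1) = U := Finset.insert_erase hU.2
    have hw : w n U = c n 0 * w n (U.erase 1) := by
      have : om n 1 = c n 0 := by simp [om]
      calc w n U = w n (insert 1 (U.erase 1)) := by rw [h1]
        _ = om n 1 * w n (U.erase 1) := w_insert n 1 _ (by simp)
        _ = c n 0 * w n (U.erase 1) := by rw [this]
    rw [hw, h1]
    ring

lemma adjA (n a : ℕ) (ha : a ∈ Finset.Ico 1 n) (f g : Finset ℕ → ℚ) :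
    ∑ U ∈ B n, w n U * Xa a f U * g U = ∑ S ∈ B n, w n S * f S * Ya n a g S := by
  obtain ⟨ha1, han⟩ := Finset.mem_Ico.mp ha
  have l : ∑ U ∈ B n, w n U * Xa a f U * g U
      = ∑ U ∈ (B n).filter (fun U => a + 1 ∈ U ∧ a ∉ U),
          w n U * f (insert a (U.erase (a+1))) * g U := by
    rw [Finset.sum_filter]
    apply Finset.sum_congr rfl
    intro U _
    unfold Xa
    split_ifs <;> ring
  have r : ∑ S ∈ B n, w n S * f S * Ya n a g S
      = ∑ S ∈ (B n).filter (fun S => a ∈ S ∧ a + 1 ∉ S),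
          w n S * f S * (c n a * g (insert (a+1) (S.erase a))) := by
    rw [Finset.sum_filter]
    apply Finset.sum_congr rfl
    intro S _
    unfold Ya
    split_ifs <;> ring
  rw [l, r]
  apply Finset.sum_nbij' (fun U => insert a (U.erase (a+1))) (fun S => insert (a+1) (S.erase a))
  · intro U hU
    simp only [Finset.mem_filter, B, Finset.mem_powerset] at hU ⊢
    obtain ⟨hUsub, hU1, hU2⟩ := hU
    refine ⟨?_, by simp [Nat.one_le_iff_ne_zero.mp ha1], by simp [hU2, Nat.succ_ne_self]⟩
    intro x hx
    rcases Finset.mem_insert.mp hx with rfl | hx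
    · simp only [Finset.mem_Icc]; omega
    · exact hUsub (Finset.mem_of_mem_erase hx)
  · intro S hS
    simp only [Finset.mem_filter, B, Finset.mem_powerset] at hS ⊢
    obtain ⟨hSsub, hS1, hS2⟩ := hS
    refine ⟨?_, by simp, by simp [hS1]⟩
    · intro x hx
      rcases Finset.mem_insert.mp hx with rfl | hx
      · simp only [Finset.mem_Icc]; omega
      · exact hSsub (Finset.mem_of_mem_erase hx)
  · intro U hU
    simp only [Finset.mem_filter] at hU
    obtain ⟨_, hU1, hU2⟩ := hU
    rw [Finset.erase_insert (by simp [hU2]), Finset.insert_erase hU1]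
  · intro S hS
    simp only [Finset.mem_filter] at hS
    obtain ⟨_, hS1, hS2⟩ := hS
    rw [Finset.erase_insert (by simp [hS2]), Finset.insert_erase hS1]
  · intro U hU
    simp only [Finset.mem_filter] at hU
    obtain ⟨_, hU1, hU2⟩ := hU
    have e1 : (insert a (U.erase (a+1))).erase a = U.erase (a+1) :=
      Finset.erase_insert (by simp [hU2])
    have e2 : insert (a+1) ((insert a (U.erase (a+1))).erase a) = U := by
      rw [e1, Finset.insert_erase hU1]
    have hw : w n U = c n a * w n (insert a (U.erase (a+1))) := by
      have w1 : w n (insert a (U.erase (a+1))) = om n a * w n (U.erase (a+1)) :=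
        w_insert n a _ (by simp [hU2])
      have w2 : w n U = om n (a+1) * w n (U.erase (a+1)) := by
        conv_lhs => rw [← Finset.insert_erase hU1]
        exact w_insert n (a+1) _ (by simp)
      rw [w1, w2, om_succ n a ha1]
      ring
    rw [hw, e2]
    ring

lemma adjoint (n : ℕ) (hn : 1 ≤ n) (f g : Finset ℕ → ℚ) :
    ip n (XX n f) g = ip n f (YY n g) := by
  unfold ip
  have l : ∑ S ∈ B n, w n S * XX n f S * g S
      = (∑ S ∈ B n, w n S * X0 f S * g S)
        + ∑ a ∈ Finset.Ico 1 n, ∑ S ∈ B n, w n S * Xa a f S * g S := by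
    rw [Finset.sum_comm]
    rw [← Finset.sum_add_distrib]
    apply Finset.sum_congr rfl
    intro S _
    simp only [XX]
    rw [mul_add, add_mul, Finset.mul_sum, Finset.sum_mul]
  have r : ∑ S ∈ B n, w n S * f S * YY n g S
      = (∑ S ∈ B n, w n S * f S * Y0 n g S)
        + ∑ a ∈ Finset.Ico 1 n, ∑ S ∈ B n, w n S * f S * Ya n a g S := by
    rw [Finset.sum_comm]
    rw [← Finset.sum_add_distrib]
    apply Finset.sum_congr rfl
    intro S _
    simp only [YY]
    rw [mul_add, Finset.mul_sum]
  rw [l, r, adj0 n hn f g]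
  congr 1
  apply Finset.sum_congr rfl
  intro a ha
  exact adjA n a ha f g

/-! ### level sets and the injectivity step -/

def L (n k : ℕ) : Finset (Finset ℕ) := (B n).filter (fun s => s.sum id = k)

lemma XX_add (n : ℕ) (p q : Finset ℕ → ℚ) (S : Finset ℕ) :
    XX n (fun U => p U + q U) S = XX n p S + XX n q S := by
  simp only [XX]
  rw [X0_add]
  rw [Finset.sum_congr rfl (fun a _ => Xa_add a p q S), Finset.sum_add_distrib]
  ring

lemma X0_smul (r : ℚ) (p : Finset ℕ → ℚ) (S : Finset ℕ) :
    X0 (fun U => r * p U) S = r * X0 p S := by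
  unfold X0; split_ifs <;> ring

lemma Xa_smul (a : ℕ) (r : ℚ) (p : Finset ℕ → ℚ) (S : Finset ℕ) :
    Xa a (fun U => r * p U) S = r * Xa a p S := by
  unfold Xa; split_ifs <;> ring

lemma XX_smul (n : ℕ) (r : ℚ) (p : Finset ℕ → ℚ) (S : Finset ℕ) :
    XX n (fun U => r * p U) S = r * XX n p S := by
  simp only [XX]
  rw [X0_smul]
  rw [Finset.sum_congr rfl (fun a _ => Xa_smul a r p S), ← Finset.mul_sum]
  ring

lemma support (n k : ℕ) (hn : 1 ≤ n) (F : Finset ℕ → ℚ)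
    (hF : ∀ S, F S ≠ 0 → S ∈ L n k) :
    ∀ U, XX n F U ≠ 0 → U ∈ L n (k + 1) := by
  intro U hU
  have hsplit : X0 F U ≠ 0 ∨ ∃ a ∈ Finset.Ico 1 n, Xa a F U ≠ 0 := by
    by_contra h
    push_neg at h
    obtain ⟨h1, h2⟩ := h
    apply hU
    unfold XX
    rw [h1, Finset.sum_eq_zero h2]
    ring
  rcases hsplit with h | ⟨a, ha, h⟩
  · unfold X0 at h
    by_cases h1 : 1 ∈ U
    swap
    · simp [h1] at h
    rw [if_pos h1] at h
    have hm := hF _ h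
    simp only [L, B, Finset.mem_filter, Finset.mem_powerset] at hm ⊢
    obtain ⟨hsub, hsum⟩ := hm
    constructor
    · intro x hx
      by_cases hx1 : x = 1
      · subst hx1; simp only [Finset.mem_Icc]; omega
      · exact hsub (Finset.mem_erase.mpr ⟨hx1, hx⟩)
    · have he := Finset.add_sum_erase U id h1
      simp only [id] at he hsum ⊢
      omega
  · obtain ⟨ha1, han⟩ := Finset.mem_Ico.mp ha
    unfold Xa at h
    by_cases hc : a + 1 ∈ U ∧ a ∉ U
    swap
    · simp [hc] at h
    obtain ⟨hc1, hc2⟩ := hc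
    rw [if_pos ⟨hc1, hc2⟩] at h
    have hm := hF _ h
    simp only [L, B, Finset.mem_filter, Finset.mem_powerset] at hm ⊢
    obtain ⟨hsub, hsum⟩ := hm
    constructor
    · intro x hx
      by_cases hx1 : x = a + 1
      · subst hx1; simp only [Finset.mem_Icc]; omega
      · exact hsub (Finset.mem_insert_of_mem (Finset.mem_erase.mpr ⟨hx1, hx⟩))
    · have hnot : a ∉ U.erase (a + 1) := fun hh => hc2 (Finset.mem_of_mem_erase hh)
      have he1 := Finset.sum_insert (f := id) hnot
      have he2 := Finset.add_sum_erase U id hc1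
      simp only [id] at he1 he2 hsum ⊢
      omega

lemma card_step (n : ℕ) (hn : 1 ≤ n) (k : ℕ) (hk : 4 * k < n * (n + 1)) :
    (L n k).card ≤ (L n (k + 1)).card := by
  classical
  haveI : Fintype {S // S ∈ L n k} := FinsetCoe.fintype _
  haveI : Fintype {S // S ∈ L n (k + 1)} := FinsetCoe.fintype _
  set E : ({S // S ∈ L n k} → ℚ) → Finset ℕ → ℚ :=
    fun f S => if h : S ∈ L n k then f ⟨S, h⟩ else 0 with hE
  have Eadd : ∀ f g : {S // S ∈ L n k} → ℚ,
      E (f + g) = fun S => E f S + E g S := by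
    intro f g; funext S; simp only [hE]; split_ifs <;> simp
  have Esmul : ∀ (r : ℚ) (f : {S // S ∈ L n k} → ℚ),
      E (r • f) = fun S => r * E f S := by
    intro r f; funext S; simp only [hE]; split_ifs <;> simp
  let Φ : ({S // S ∈ L n k} → ℚ) →ₗ[ℚ] ({S // S ∈ L n (k+1)} → ℚ) := {
    toFun := fun f U => XX n (E f) U.1
    map_add' := by
      intro f g; funext U
      simp only [Pi.add_apply]
      rw [Eadd, XX_add]
    map_smul' := by
      intro r f; funext U
      simp only [Pi.smul_apply, RingHom.id_apply, smul_eq_mul]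
      rw [Esmul, XX_smul] }
  have hinj : Function.Injective Φ := by
    rw [injective_iff_map_eq_zero]
    intro f hf
    by_contra hne
    obtain ⟨S₀, hS₀⟩ : ∃ S₀, f S₀ ≠ 0 := by
      by_contra h; push_neg at h; exact hne (funext h)
    set F := E f with hF
    have hsupp : ∀ S, F S ≠ 0 → S ∈ L n k := by
      intro S h
      by_cases hh : S ∈ L n k
      · exact hh
      · simp [hF, hE, hh] at h
    have hF0 : F S₀.1 ≠ 0 := by
      simpa [hF, hE, S₀.2] using hS₀
    have nonneg : ∀ G : Finset ℕ → ℚ, 0 ≤ ip n G G := by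
      intro G
      apply Finset.sum_nonneg
      intro S hS
      rw [mul_assoc]
      exact mul_nonneg (w_pos n hn hS).le (mul_self_nonneg _)
    have ipFF : 0 < ip n F F := by
      apply Finset.sum_pos'
      · intro S hS
        rw [mul_assoc]
        exact mul_nonneg (w_pos n hn hS).le (mul_self_nonneg _)
      · refine ⟨S₀.1, Finset.mem_of_mem_filter _ S₀.2, ?_⟩
        rw [mul_assoc]
        exact mul_pos (w_pos n hn (Finset.mem_of_mem_filter _ S₀.2)) (mul_self_pos.mpr hF0)
    have key1 : ip n (XX n F) (XX n F)
        = ip n (YY n F) (YY n F) + ((n:ℚ) * (n+1) - 4 * k) * ip n F F := by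
      have h1 : ip n (XX n F) (XX n F) = ip n F (YY n (XX n F)) := adjoint n hn F (XX n F)
      have h2 : ip n (XX n (YY n F)) F = ip n (YY n F) (YY n F) := adjoint n hn (YY n F) F
      have h4 : ip n F (XX n (YY n F)) = ip n (XX n (YY n F)) F := ip_comm n _ _
      have h3 : ip n F (YY n (XX n F)) - ip n F (XX n (YY n F))
          = ((n:ℚ) * (n+1) - 4 * k) * ip n F F := by
        unfold ip
        rw [← Finset.sum_sub_distrib, Finset.mul_sum]
        apply Finset.sum_congr rfl
        intro S hS
        have hcomm := commutator n hn F S hS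
        by_cases hFS : F S = 0
        · simp [hFS]
        · have hsum : S.sum id = k := by
            have := hsupp S hFS
            simp only [L, Finset.mem_filter] at this
            exact this.2
          calc w n S * F S * YY n (XX n F) S - w n S * F S * XX n (YY n F) S
              = w n S * F S * (YY n (XX n F) S - XX n (YY n F) S) := by ring
            _ = w n S * F S * (((n:ℚ) * (n+1) - 4 * (S.sum id : ℕ)) * F S) := by rw [hcomm]
            _ = ((n:ℚ) * (n+1) - 4 * (k:ℚ)) * (w n S * F S * F S) := by rw [hsum]; ring
      linarith [h1, h2, h3, h4]
    have hc : 0 < (n:ℚ) * (n+1) - 4 * k := by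
      have : ((4 * k : ℕ) : ℚ) < ((n * (n+1) : ℕ) : ℚ) := by exact_mod_cast hk
      push_cast at this
      linarith
    have hpos : 0 < ip n (XX n F) (XX n F) := by
      have := nonneg (YY n F)
      nlinarith [key1, ipFF]
    obtain ⟨U, hU, hne'⟩ := Finset.exists_ne_zero_of_sum_ne_zero (ne_of_gt hpos)
    have hXU : XX n F U ≠ 0 := by
      intro h
      apply hne'
      rw [h]
      ring
    have hUL : U ∈ L n (k + 1) := support n k hn F hsupp U hXU
    have hval : Φ f ⟨U, hUL⟩ ≠ 0 := hXU
    rw [hf] at hval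
    exact hval rfl
  calc (L n k).card = Fintype.card {S // S ∈ L n k} := (Fintype.card_coe _).symm
    _ = Module.finrank ℚ ({S // S ∈ L n k} → ℚ) := (Module.finrank_pi ℚ).symm
    _ ≤ Module.finrank ℚ ({S // S ∈ L n (k+1)} → ℚ) :=
        LinearMap.finrank_le_finrank_of_injective hinj
    _ = Fintype.card {S // S ∈ L n (k+1)} := Module.finrank_pi ℚ
    _ = (L n (k+1)).card := Fintype.card_coe _

/-! ### symmetry, vanishing, and the chain -/

lemma gauss (n : ℕ) : (∑ x ∈ Finset.Icc 1 n, id x) * 2 = n * (n + 1) := by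
  induction n with
  | zero => simp
  | succ m ih =>
    rw [Finset.sum_Icc_succ_top (by omega)]
    simp only [id] at ih ⊢
    nlinarith [ih]

lemma symm_card (n K : ℕ) (hK : K ≤ (Finset.Icc 1 n).sum id) :
    (L n K).card = (L n ((Finset.Icc 1 n).sum id - K)).card := by
  apply Finset.card_nbij' (fun S => Finset.Icc 1 n \ S) (fun T => Finset.Icc 1 n \ T)
  · intro S hS
    simp only [L, B, Finset.mem_coe, Finset.mem_filter, Finset.mem_powerset] at hS ⊢
    obtain ⟨hsub, hsum⟩ := hS
    refine ⟨Finset.sdiff_subset, ?_⟩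
    have h3 : (Finset.Icc 1 n \ S).sum id + S.sum id = (Finset.Icc 1 n).sum id :=
      Finset.sum_sdiff (f := id) hsub
    omega
  · intro T hT
    simp only [L, B, Finset.mem_coe, Finset.mem_filter, Finset.mem_powerset] at hT ⊢
    obtain ⟨hsub, hsum⟩ := hT
    refine ⟨Finset.sdiff_subset, ?_⟩
    have h3 : (Finset.Icc 1 n \ T).sum id + T.sum id = (Finset.Icc 1 n).sum id :=
      Finset.sum_sdiff (f := id) hsub
    omega
  · intro S hS
    simp only [L, B, Finset.mem_coe, Finset.mem_filter, Finset.mem_powerset] at hS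
    exact Finset.sdiff_sdiff_eq_self hS.1
  · intro T hT
    simp only [L, B, Finset.mem_coe, Finset.mem_filter, Finset.mem_powerset] at hT
    exact Finset.sdiff_sdiff_eq_self hT.1

lemma vanish (n K : ℕ) (hK : (Finset.Icc 1 n).sum id < K) : (L n K).card = 0 := by
  rw [Finset.card_eq_zero]
  simp only [L]
  rw [Finset.filter_eq_empty_iff]
  intro S hS
  have hsub := Finset.mem_powerset.mp hS
  have h3 : S.sum id ≤ (Finset.Icc 1 n).sum id :=
    Finset.sum_le_sum_of_subset (f := id) hsub
  omega

lemma chain (n : ℕ) (hn : 1 ≤ n) (e : ℕ) (he : e = n * (n + 1)) :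
    ∀ t k, 4 * (k + t) ≤ e → (L n k).card ≤ (L n (k + t)).card := by
  intro t
  induction t with
  | zero => intro k _; exact le_refl _
  | succ m ih =>
    intro k hb
    have h1 : (L n k).card ≤ (L n (k + m)).card := ih k (by omega)
    have h2 : (L n (k + m)).card ≤ (L n (k + m + 1)).card := by
      apply card_step n hn (k + m)
      omega
    exact le_trans h1 h2

lemma bound (n : ℕ) (hn : 1 ≤ n) (K : ℕ) :
    (L n K).card ≤ (L n (n * (n + 1) / 4)).card := by
  have hg : (Finset.Icc 1 n).sum id * 2 = n * (n + 1) := gauss n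
  obtain ⟨e, he⟩ : ∃ e, e = n * (n + 1) := ⟨_, rfl⟩
  rw [← he] at hg ⊢
  rcases le_or_gt K (e / 4) with h | h
  · have hc := chain n hn e he (e / 4 - K) K (by omega)
    have heq : K + (e / 4 - K) = e / 4 := by omega
    rwa [heq] at hc
  · rcases le_or_gt K ((Finset.Icc 1 n).sum id) with h2 | h2
    · rw [symm_card n K h2]
      have hc := chain n hn e he (e / 4 - ((Finset.Icc 1 n).sum id - K))
        ((Finset.Icc 1 n).sum id - K) (by omega)
      have heq : (Finset.Icc 1 n).sum id - K
          + (e / 4 - ((Finset.Icc 1 n).sum id - K)) = e / 4 := by omega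
      rwa [heq] at hc
    · rw [vanish n K h2]
      exact Nat.zero_le _

end SubsetSum

/-- The number of subsets of `{1,…,n}` whose elements sum to `i`. -/
def levelCard (n i : ℕ) : ℕ :=
  (((Finset.Icc 1 n).powerset).filter (fun s => s.sum id = i)).card

/-- `M n`: the maximum over `K ∈ ℕ` of the number of subsets of `{1,…,n}`
whose elements sum to `K`. -/
noncomputable def M (n : ℕ) : ℕ := ⨆ K : ℕ, levelCard n K

/-- For `n ≥ 1`, `M n` is attained at the middle rank: `M n` equals the number
of subsets of `{1,…,n}` whose elements sum to `⌊n(n+1)/4⌋`. -/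
theorem stmt10 (n : ℕ) (hn : 1 ≤ n) : M n = levelCard n (n * (n + 1) / 4) := by
  have lev : ∀ K, levelCard n K = (SubsetSum.L n K).card := fun K => rfl
  have bd : ∀ K, levelCard n K ≤ levelCard n (n * (n + 1) / 4) := by
    intro K
    rw [lev, lev]
    exact SubsetSum.bound n hn K
  rw [M]
  apply le_antisymm
  · exact ciSup_le bd
  · refine le_ciSup ⟨levelCard n (n * (n + 1) / 4), ?_⟩ (n * (n + 1) / 4)
    rintro x ⟨K, rfl⟩
    exact bd K
end

section
/- The rank levels of (P([n]), ⪯₂) are rank unimodal: there exists j such that, writing p_i for the number of subsets of {1,...,n} whose elements sum to i, one has p₀ ≤ p₁ ≤ ⋯ ≤ p_j and p_j ≥ p_{j+1} ≥ ⋯ ≥ p_{n(n+1)/2}. -/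
namespace Stmt12
open Finset

/-- ambient collection: subsets of {1,…,n} -/
def P (n : ℕ) : Finset (Finset ℕ) := (Finset.Icc 1 n).powerset
/-- level k: subsets with sum k -/
def A (n k : ℕ) : Finset (Finset ℕ) := (P n).filter (fun s => s.sum id = k)

def up (i : ℕ) (s : Finset ℕ) : Finset ℕ :=
  if i = 0 then insert 1 s else insert (i+1) (s.erase i)
def canUp (i : ℕ) (s : Finset ℕ) : Prop :=
  if i = 0 then 1 ∉ s else (i ∈ s ∧ i+1 ∉ s)
def down (i : ℕ) (t : Finset ℕ) : Finset ℕ :=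
  if i = 0 then t.erase 1 else insert i (t.erase (i+1))
def canDown (i : ℕ) (t : Finset ℕ) : Prop :=
  if i = 0 then 1 ∈ t else (i+1 ∈ t ∧ i ∉ t)

instance (i : ℕ) (s : Finset ℕ) : Decidable (canUp i s) := by unfold canUp; infer_instance
instance (i : ℕ) (t : Finset ℕ) : Decidable (canDown i t) := by unfold canDown; infer_instance

/-- weights -/
def w (n i : ℕ) : ℚ := if i = 0 then n*(n+1) else 2*((n:ℚ)*(n+1) - i*(i+1))
def m (n j : ℕ) : ℚ := ∏ i ∈ Finset.range j, w n i
def μ (n : ℕ) (s : Finset ℕ) : ℚ := ∏ j ∈ s, m n j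

/-- the raising operator -/
def E (n : ℕ) (x : Finset ℕ → ℚ) (t : Finset ℕ) : ℚ :=
  ∑ i ∈ Finset.range n, if canDown i t then x (down i t) else 0
/-- the lowering operator -/
def F (n : ℕ) (x : Finset ℕ → ℚ) (s : Finset ℕ) : ℚ :=
  ∑ i ∈ Finset.range n, if canUp i s then w n i * x (up i s) else 0


lemma down_up {i : ℕ} {s : Finset ℕ} (h : canUp i s) : down i (up i s) = s := by
  simp only [canUp, up, down] at *
  by_cases hi : i = 0 <;> simp only [hi, if_true, if_false, reduceIte] at h ⊢
  · exact Finset.erase_insert h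
  · obtain ⟨h1, h2⟩ := h
    ext a
    by_cases ha : a ∈ s <;> by_cases hai : a = i <;> by_cases hai2 : a = i + 1 <;>
      simp_all [Finset.mem_insert, Finset.mem_erase] <;> omega

lemma canDown_up {i : ℕ} {s : Finset ℕ} (h : canUp i s) : canDown i (up i s) := by
  simp only [canUp, up, canDown] at *
  by_cases hi : i = 0 <;> simp only [hi, if_true, if_false, reduceIte] at h ⊢
  · simp
  · obtain ⟨h1, h2⟩ := h
    refine ⟨Finset.mem_insert_self _ _, ?_⟩
    simp [Finset.mem_insert, Finset.mem_erase]

lemma up_down {i : ℕ} {t : Finset ℕ} (h : canDown i t) : up i (down i t) = t := by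
  simp only [canDown, up, down] at *
  by_cases hi : i = 0 <;> simp only [hi, if_true, if_false, reduceIte] at h ⊢
  · exact Finset.insert_erase h
  · obtain ⟨h1, h2⟩ := h
    ext a
    by_cases ha : a ∈ t <;> by_cases hai : a = i <;> by_cases hai2 : a = i + 1 <;>
      simp_all [Finset.mem_insert, Finset.mem_erase] <;> omega

lemma canUp_down {i : ℕ} {t : Finset ℕ} (h : canDown i t) : canUp i (down i t) := by
  simp only [canDown, canUp, down] at *
  by_cases hi : i = 0 <;> simp only [hi, if_true, if_false, reduceIte] at h ⊢
  · simp
  · obtain ⟨h1, h2⟩ := h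
    refine ⟨Finset.mem_insert_self _ _, ?_⟩
    simp [Finset.mem_insert, Finset.mem_erase]

lemma sum_up {i : ℕ} {s : Finset ℕ} (h : canUp i s) : (up i s).sum id = s.sum id + 1 := by
  simp only [canUp, up] at *
  by_cases hi : i = 0 <;> simp only [hi, if_true, if_false, reduceIte] at h ⊢
  · rw [Finset.sum_insert h]; simp [Nat.add_comm]
  · obtain ⟨h1, h2⟩ := h
    rw [Finset.sum_insert (by simp only [Finset.mem_erase]; tauto),
      ← Finset.add_sum_erase _ _ h1]
    simp only [id]; omega

lemma up_mem_P {n i : ℕ} {s : Finset ℕ} (hs : s ∈ P n) (h : canUp i s) (hi : i < n) :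
    up i s ∈ P n := by
  simp only [P, Finset.mem_powerset] at *
  simp only [canUp, up] at *
  by_cases h0 : i = 0 <;> simp only [h0, if_true, if_false, reduceIte] at h ⊢
  · exact Finset.insert_subset (by simp only [Finset.mem_Icc]; omega) hs
  · exact Finset.insert_subset (by simp only [Finset.mem_Icc]; omega)
      ((Finset.erase_subset _ _).trans hs)

lemma down_mem_P {n i : ℕ} {t : Finset ℕ} (ht : t ∈ P n) (h : canDown i t) (hi : i < n) :
    down i t ∈ P n := by
  simp only [P, Finset.mem_powerset] at *
  simp only [canDown, down] at *
  by_cases h0 : i = 0 <;> simp only [h0, if_true, if_false, reduceIte] at h ⊢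
  · exact (Finset.erase_subset _ _).trans ht
  · exact Finset.insert_subset (by simp only [Finset.mem_Icc]; omega)
      ((Finset.erase_subset _ _).trans ht)

lemma mu_up {n i : ℕ} {s : Finset ℕ} (h : canUp i s) (hi : i < n) :
    μ n (up i s) = w n i * μ n s := by
  simp only [canUp, up, μ] at *
  by_cases h0 : i = 0 <;> simp only [h0, if_true, if_false, reduceIte] at h ⊢
  · rw [Finset.prod_insert h]
    simp [m, h0]
  · obtain ⟨h1, h2⟩ := h
    rw [Finset.prod_insert (by simp only [Finset.mem_erase]; tauto),
      ← Finset.mul_prod_erase _ _ h1]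
    have : m n (i+1) = m n i * w n i := Finset.prod_range_succ _ _
    rw [this]; ring

lemma cross_iff {i j : ℕ} (hij : i ≠ j) {t : Finset ℕ} :
    (canUp j t ∧ canDown i (up j t)) ↔ (canDown i t ∧ canUp j (down i t)) := by
  simp only [canUp, canDown, up, down]
  by_cases hi : i = 0 <;> by_cases hj : j = 0 <;>
    simp only [hi, hj, if_true, if_false, reduceIte] <;>
    [omega;
     skip;
     skip;
     skip] <;>
  · by_cases h1t : 1 ∈ t <;> by_cases hit : i ∈ t <;> by_cases hi1t : i + 1 ∈ t <;>
      by_cases hjt : j ∈ t <;> by_cases hj1t : j + 1 ∈ t <;>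
      simp_all [Finset.mem_insert, Finset.mem_erase] <;> omega

lemma cross_eq {i j : ℕ} (hij : i ≠ j) {t : Finset ℕ} (h1 : canUp j t)
    (h2 : canDown i (up j t)) : down i (up j t) = up j (down i t) := by
  simp only [canUp, canDown, up, down] at *
  by_cases hi : i = 0 <;> by_cases hj : j = 0 <;>
    simp only [hi, hj, if_true, if_false, reduceIte] at h1 h2 ⊢ <;>
    [omega; skip; skip; skip] <;>
  · ext a
    by_cases h1t : 1 ∈ t <;> by_cases hit : i ∈ t <;> by_cases hi1t : i + 1 ∈ t <;>
      by_cases hjt : j ∈ t <;> by_cases hj1t : j + 1 ∈ t <;>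
      by_cases hat : a ∈ t <;>
      simp_all [Finset.mem_insert, Finset.mem_erase] <;> omega

/-- simplified diagonal indicator -/
def g (i : ℕ) (s : Finset ℕ) : ℚ :=
  if i = 0 then 1 - 2*(if 1 ∈ s then (1:ℚ) else 0)
  else (if i ∈ s then (1:ℚ) else 0) - (if i+1 ∈ s then 1 else 0)

lemma g_eq (i : ℕ) (s : Finset ℕ) :
    (if canUp i s then (1:ℚ) else 0) - (if canDown i s then (1:ℚ) else 0) = g i s := by
  simp only [canUp, canDown, g]
  by_cases hi : i = 0 <;> simp only [hi, if_true, if_false, reduceIte]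
  · by_cases h : 1 ∈ s <;> simp [h]; ring
  · by_cases h1 : i ∈ s <;> by_cases h2 : i + 1 ∈ s <;> simp [h1, h2]

lemma g_insert {i a : ℕ} {s : Finset ℕ} (ha : a ∉ s) (ha1 : 1 ≤ a) :
    g i (insert a s) = g i s +
      ((if i = a then (1:ℚ) else 0) +
       (if i + 1 = a then (if i = 0 then (-2:ℚ) else -1) else 0)) := by
  simp only [g, Finset.mem_insert]
  by_cases hi : i = 0
  · subst hi
    by_cases h2 : a = 1
    · subst h2; simp_all; ring
    · have e1 : ¬(1 = a) := by omega
      have e2 : ¬(0 = a) := by omega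
      simp_all
  · by_cases h1 : i = a
    · subst h1
      have h2 : ¬(i + 1 = i) := by omega
      simp_all
      by_cases h4 : i + 1 ∈ s <;> simp [h4] <;> ring
    · by_cases h2 : i + 1 = a
      · have h3 : i + 1 ∉ s := by rwa [h2]
        simp_all
        by_cases h4 : i ∈ s <;> simp [h4] <;> ring
      · simp_all

lemma w_pos {n i : ℕ} (hi : i < n) : 0 < w n i := by
  unfold w
  by_cases h0 : i = 0 <;> simp only [h0, if_true, if_false, reduceIte]
  · have : (1:ℚ) ≤ n := by exact_mod_cast (by omega : 1 ≤ n)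
    nlinarith
  · have h1 : (i:ℚ) < n := by exact_mod_cast hi
    have h2 : (0:ℚ) ≤ i := by positivity
    nlinarith

lemma m_pos {n j : ℕ} (hj : j ≤ n) : 0 < m n j := by
  unfold m
  exact Finset.prod_pos fun i hi => w_pos (by simp at hi; omega)

lemma mu_pos {n : ℕ} {s : Finset ℕ} (hs : s ∈ P n) : 0 < μ n s := by
  unfold μ
  simp only [P, Finset.mem_powerset] at hs
  exact Finset.prod_pos fun j hj => m_pos (by have := hs hj; simp [Finset.mem_Icc] at this; omega)

lemma diag_sum {n : ℕ} {s : Finset ℕ} (hs : s ∈ P n) :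
    ∑ i ∈ Finset.range n,
      w n i * ((if canUp i s then (1:ℚ) else 0) - (if canDown i s then (1:ℚ) else 0))
      = (n:ℚ)*(n+1) - 4*(s.sum id : ℕ) := by
  simp only [g_eq]
  simp only [P, Finset.mem_powerset] at hs
  revert hs
  induction s using Finset.induction_on with
  | empty =>
    intro _
    simp only [Finset.sum_empty, Nat.cast_zero, mul_zero, sub_zero]
    have : ∀ i ∈ Finset.range n, w n i * g i ∅ = if i = 0 then (n:ℚ)*(n+1) else 0 := by
      intro i hi
      by_cases h0 : i = 0 <;> simp [g, h0, w]
    rw [Finset.sum_congr rfl this, Finset.sum_ite_eq' (Finset.range n) 0 (fun _ => (n:ℚ)*(n+1))]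
    by_cases hn : 0 < n
    · simp [Finset.mem_range.mpr hn]
    · have : n = 0 := by omega
      simp [this]
  | @insert a s ha ih =>
    intro hs
    have hsub : s ⊆ Finset.Icc 1 n := (Finset.subset_insert a s).trans hs
    have haIcc : a ∈ Finset.Icc 1 n := hs (Finset.mem_insert_self a s)
    simp only [Finset.mem_Icc] at haIcc
    have ha1 : 1 ≤ a := haIcc.1
    have han : a ≤ n := haIcc.2
    have hn1 : 1 ≤ n := le_trans ha1 han
    have step : ∀ i ∈ Finset.range n, w n i * g i (insert a s)
        = w n i * g i s + (w n i * (if i = a then (1:ℚ) else 0)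
          + w n i * (if i + 1 = a then (if i = 0 then (-2:ℚ) else -1) else 0)) := by
      intro i hi
      rw [g_insert ha ha1]; ring
    rw [Finset.sum_congr rfl step, Finset.sum_add_distrib, Finset.sum_add_distrib, ih hsub]
    have e1 : ∑ i ∈ Finset.range n, w n i * (if i = a then (1:ℚ) else 0)
        = if a ∈ Finset.range n then w n a else 0 := by
      rw [← Finset.sum_ite_eq' (Finset.range n) a (fun i => w n i)]
      exact Finset.sum_congr rfl fun i _ => by by_cases h : i = a <;> simp [h]
    have e2 : ∑ i ∈ Finset.range n, w n i * (if i + 1 = a then (if i = 0 then (-2:ℚ) else -1) else 0)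
        = w n (a-1) * (if a - 1 = 0 then (-2:ℚ) else -1) := by
      have : ∀ i ∈ Finset.range n, w n i * (if i + 1 = a then (if i = 0 then (-2:ℚ) else -1) else 0)
          = if i = a - 1 then w n i * (if i = 0 then (-2:ℚ) else -1) else 0 := by
        intro i hi
        by_cases h : i + 1 = a
        · have h5 : i = a - 1 := by omega
          have h6 : a - 1 + 1 = a := by omega
          simp [h, h5, h6]
        · have : ¬(i = a - 1) := by omega
          simp [h, this]
      rw [Finset.sum_congr rfl this, Finset.sum_ite_eq' (Finset.range n) (a-1)
        (fun i => w n i * (if i = 0 then (-2:ℚ) else -1))]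
      have : a - 1 ∈ Finset.range n := Finset.mem_range.mpr (by omega)
      simp [this]
    rw [e1, e2, Finset.sum_insert ha]
    -- now pure arithmetic
    have hcast : ((a + s.sum id : ℕ) : ℚ) = (a:ℚ) + (s.sum id : ℕ) := by push_cast; ring
    simp only [id] at hcast ⊢
    rw [hcast]
    by_cases hlt : a < n
    · simp only [Finset.mem_range.mpr hlt, if_true]
      by_cases ha1' : a = 1
      · subst ha1'
        simp only [show (1:ℕ)-1 = 0 from rfl, if_true, reduceIte]
        unfold w
        simp only [if_true, reduceIte, show ¬(1 = 0) by omega, if_false]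
        push_cast
        ring
      · have h2 : ¬(a - 1 = 0) := by omega
        unfold w
        simp only [h2, if_false, show ¬(a = 0) by omega, reduceIte]
        have : ((a - 1 : ℕ) : ℚ) = (a:ℚ) - 1 := by
          push_cast [Nat.cast_sub (by omega : 1 ≤ a)]; ring
        rw [this]
        push_cast
        ring
    · have hae : a = n := by omega
      subst hae
      simp only [Finset.mem_range, lt_irrefl, if_false, reduceIte]
      by_cases ha1' : a = 1
      · subst ha1'
        simp only [show (1:ℕ)-1 = 0 from rfl, if_true, reduceIte]
        unfold w
        simp only [if_true, reduceIte]
        push_cast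
        ring
      · have h2 : ¬(a - 1 = 0) := by omega
        unfold w
        simp only [h2, if_false, reduceIte]
        have : ((a - 1 : ℕ) : ℚ) = (a:ℚ) - 1 := by
          push_cast [Nat.cast_sub (by omega : 1 ≤ a)]; ring
        rw [this]
        push_cast
        ring

lemma adjoint (n : ℕ) (x y : Finset ℕ → ℚ) :
    ∑ t ∈ P n, μ n t * (E n x t * y t) = ∑ s ∈ P n, μ n s * (x s * F n y s) := by
  have lhs : ∀ t ∈ P n, μ n t * (E n x t * y t)
      = ∑ i ∈ Finset.range n, (if canDown i t then μ n t * (x (down i t) * y t) else 0) := by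
    intro t _
    unfold E
    rw [Finset.sum_mul, Finset.mul_sum]
    refine Finset.sum_congr rfl fun i _ => ?_
    by_cases h : canDown i t <;> simp [h]
  have rhs : ∀ s ∈ P n, μ n s * (x s * F n y s)
      = ∑ i ∈ Finset.range n, (if canUp i s then μ n (up i s) * (x s * y (up i s)) else 0) := by
    intro s hs
    unfold F
    rw [Finset.mul_sum, Finset.mul_sum]
    refine Finset.sum_congr rfl fun i hi => ?_
    by_cases h : canUp i s
    · rw [if_pos h, if_pos h, mu_up h (Finset.mem_range.mp hi)]
      ring
    · simp [h]
  rw [Finset.sum_congr rfl lhs, Finset.sum_congr rfl rhs]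
  rw [Finset.sum_comm]
  conv_rhs => rw [Finset.sum_comm]
  refine Finset.sum_congr rfl fun i hi => ?_
  have hi' : i < n := Finset.mem_range.mp hi
  rw [← Finset.sum_filter, ← Finset.sum_filter]
  refine Finset.sum_bij' (fun t _ => down i t) (fun s _ => up i s) ?_ ?_ ?_ ?_ ?_
  · intro t ht
    rw [Finset.mem_filter] at ht ⊢
    exact ⟨down_mem_P ht.1 ht.2 hi', canUp_down ht.2⟩
  · intro s hs
    rw [Finset.mem_filter] at hs ⊢
    exact ⟨up_mem_P hs.1 hs.2 hi', canDown_up hs.2⟩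
  · intro t ht
    rw [Finset.mem_filter] at ht
    exact up_down ht.2
  · intro s hs
    rw [Finset.mem_filter] at hs
    exact down_up hs.2
  · intro t ht
    rw [Finset.mem_filter] at ht
    rw [up_down ht.2]

lemma commutator (n : ℕ) (x : Finset ℕ → ℚ) {t : Finset ℕ} (ht : t ∈ P n) :
    F n (E n x) t - E n (F n x) t = ((n:ℚ)*(n+1) - 4*(t.sum id : ℕ)) * x t := by
  have h1 : F n (E n x) t = ∑ j ∈ Finset.range n, ∑ i ∈ Finset.range n,
      (if canUp j t ∧ canDown i (up j t) then w n j * x (down i (up j t)) else 0) := by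
    unfold F E
    refine Finset.sum_congr rfl fun j _ => ?_
    by_cases h : canUp j t
    · rw [if_pos h, Finset.mul_sum]
      refine Finset.sum_congr rfl fun i _ => ?_
      by_cases h2 : canDown i (up j t) <;> simp [h, h2]
    · simp [h]
  have h2 : E n (F n x) t = ∑ j ∈ Finset.range n, ∑ i ∈ Finset.range n,
      (if canDown i t ∧ canUp j (down i t) then w n j * x (up j (down i t)) else 0) := by
    unfold E F
    conv_rhs => rw [Finset.sum_comm]
    refine Finset.sum_congr rfl fun i _ => ?_
    by_cases h : canDown i t
    · rw [if_pos h]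
      refine Finset.sum_congr rfl fun j _ => ?_
      by_cases h3 : canUp j (down i t) <;> simp [h, h3]
    · simp [h]
  rw [h1, h2, ← Finset.sum_sub_distrib]
  have h3 : ∀ j ∈ Finset.range n,
      (∑ i ∈ Finset.range n, (if canUp j t ∧ canDown i (up j t) then w n j * x (down i (up j t)) else 0))
      - (∑ i ∈ Finset.range n, (if canDown i t ∧ canUp j (down i t) then w n j * x (up j (down i t)) else 0))
      = w n j * ((if canUp j t then (1:ℚ) else 0) - (if canDown j t then (1:ℚ) else 0)) * x t := by
    intro j hj
    rw [← Finset.sum_sub_distrib]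
    have h4 : ∀ i ∈ Finset.range n,
        (if canUp j t ∧ canDown i (up j t) then w n j * x (down i (up j t)) else 0)
        - (if canDown i t ∧ canUp j (down i t) then w n j * x (up j (down i t)) else 0)
        = if i = j then ((if canUp j t then w n j * x t else 0) - (if canDown j t then w n j * x t else 0)) else 0 := by
      intro i _
      by_cases hij : i = j
      · subst hij
        have e1 : (canUp i t ∧ canDown i (up i t)) ↔ canUp i t :=
          ⟨fun h => h.1, fun h => ⟨h, canDown_up h⟩⟩
        have e2 : (canDown i t ∧ canUp i (down i t)) ↔ canDown i t :=
          ⟨fun h => h.1, fun h => ⟨h, canUp_down h⟩⟩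
        simp only [if_pos rfl]
        by_cases hu : canUp i t <;> by_cases hd : canDown i t
        · rw [if_pos (e1.mpr hu), if_pos (e2.mpr hd), down_up hu, up_down hd, if_pos hu, if_pos hd]
          simp
        · rw [if_pos (e1.mpr hu), if_neg (fun hc => hd (e2.mp hc)), down_up hu, if_pos hu, if_neg hd]
          simp
        · rw [if_neg (fun hc => hu (e1.mp hc)), if_pos (e2.mpr hd), up_down hd, if_neg hu, if_pos hd]
          simp
        · rw [if_neg (fun hc => hu (e1.mp hc)), if_neg (fun hc => hd (e2.mp hc)), if_neg hu, if_neg hd]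
          simp
      · rw [if_neg hij]
        by_cases hc : canUp j t ∧ canDown i (up j t)
        · rw [if_pos hc, if_pos ((cross_iff hij).mp hc), cross_eq hij hc.1 hc.2]
          ring
        · rw [if_neg hc, if_neg (fun hc2 => hc ((cross_iff hij).mpr hc2))]
          ring
    rw [Finset.sum_congr rfl h4, Finset.sum_ite_eq' (Finset.range n) j _, if_pos hj]
    by_cases hu : canUp j t <;> by_cases hd : canDown j t <;> simp [hu, hd] <;> ring
  rw [Finset.sum_congr rfl h3]
  have : ∀ j ∈ Finset.range n, w n j * ((if canUp j t then (1:ℚ) else 0) - (if canDown j t then (1:ℚ) else 0)) * x t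
      = (w n j * ((if canUp j t then (1:ℚ) else 0) - (if canDown j t then (1:ℚ) else 0))) * x t := by
    intro j _; ring
  rw [Finset.sum_congr rfl this, ← Finset.sum_mul, diag_sum ht]

lemma A_subset_P {n k : ℕ} : A n k ⊆ P n := Finset.filter_subset _ _

lemma mem_A {n k : ℕ} {s : Finset ℕ} : s ∈ A n k ↔ s ∈ P n ∧ s.sum id = k := Finset.mem_filter

lemma E_support {n k : ℕ} {x : Finset ℕ → ℚ} (hx : ∀ s, x s ≠ 0 → s ∈ A n k)
    {t : Finset ℕ} (h : E n x t ≠ 0) : t ∈ A n (k+1) := by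
  unfold E at h
  obtain ⟨i, hi, hne⟩ := Finset.exists_ne_zero_of_sum_ne_zero h
  have hcd : canDown i t := by by_contra hc; simp [hc] at hne
  rw [if_pos hcd] at hne
  have hsA : down i t ∈ A n k := hx _ hne
  rw [mem_A] at hsA ⊢
  have hcu : canUp i (down i t) := canUp_down hcd
  have hi' : i < n := Finset.mem_range.mp hi
  constructor
  · rw [← up_down hcd]; exact up_mem_P hsA.1 hcu hi'
  · rw [← up_down hcd, sum_up hcu, hsA.2]

lemma E_injective {n k : ℕ} (hk : 4*k < n*(n+1)) {x : Finset ℕ → ℚ}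
    (hx : ∀ s, x s ≠ 0 → s ∈ A n k) (hE : ∀ t, E n x t = 0) : ∀ s, x s = 0 := by
  intro s0
  by_contra hs0
  have hs0A : s0 ∈ A n k := hx s0 hs0
  have hs0P : s0 ∈ P n := A_subset_P hs0A
  have hzero : ∑ s ∈ P n, μ n s * (x s * F n (E n x) s) = 0 := by
    rw [← adjoint n x (E n x)]
    exact Finset.sum_eq_zero fun t _ => by rw [hE t]; ring
  have hsplit : ∑ s ∈ P n, μ n s * (x s * F n (E n x) s)
      = (∑ s ∈ P n, μ n s * (F n x s * F n x s))
        + ∑ s ∈ P n, μ n s * (((n:ℚ)*(n+1) - 4*(s.sum id : ℕ)) * (x s * x s)) := by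
    calc ∑ s ∈ P n, μ n s * (x s * F n (E n x) s)
        = ∑ s ∈ P n, (μ n s * (E n (F n x) s * x s)
            + μ n s * (((n:ℚ)*(n+1) - 4*(s.sum id : ℕ)) * (x s * x s))) := by
          refine Finset.sum_congr rfl fun s hs => ?_
          have hc := commutator n x hs
          have hF : F n (E n x) s
              = E n (F n x) s + ((n:ℚ)*(n+1) - 4*(s.sum id : ℕ)) * x s := by linarith
          rw [hF]; ring
      _ = (∑ s ∈ P n, μ n s * (E n (F n x) s * x s))
            + ∑ s ∈ P n, μ n s * (((n:ℚ)*(n+1) - 4*(s.sum id : ℕ)) * (x s * x s)) :=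
          Finset.sum_add_distrib
      _ = _ := by rw [adjoint n (F n x) x]
  have hsum0 : (∑ s ∈ P n, μ n s * (F n x s * F n x s))
      + ∑ s ∈ P n, μ n s * (((n:ℚ)*(n+1) - 4*(s.sum id : ℕ)) * (x s * x s)) = 0 := by
    rw [← hsplit]; exact hzero
  have hnn1 : 0 ≤ ∑ s ∈ P n, μ n s * (F n x s * F n x s) :=
    Finset.sum_nonneg fun s hs => mul_nonneg (mu_pos hs).le (mul_self_nonneg _)
  have hterm : ∀ s ∈ P n, 0 ≤ μ n s * (((n:ℚ)*(n+1) - 4*(s.sum id : ℕ)) * (x s * x s)) := by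
    intro s hs
    by_cases hxs : x s = 0
    · simp [hxs]
    · have hsA := hx s hxs
      have hsum : s.sum id = k := (mem_A.mp hsA).2
      have hpos : (0:ℚ) < (n:ℚ)*(n+1) - 4*(s.sum id : ℕ) := by
        rw [hsum]
        have : (4*k : ℚ) < (n:ℚ)*(n+1) := by exact_mod_cast hk
        linarith
      exact mul_nonneg (mu_pos hs).le (mul_nonneg hpos.le (mul_self_nonneg _))
  have hnn2 : 0 ≤ ∑ s ∈ P n, μ n s * (((n:ℚ)*(n+1) - 4*(s.sum id : ℕ)) * (x s * x s)) :=
    Finset.sum_nonneg hterm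
  have hz2 : ∑ s ∈ P n, μ n s * (((n:ℚ)*(n+1) - 4*(s.sum id : ℕ)) * (x s * x s)) = 0 := by
    linarith
  have := (Finset.sum_eq_zero_iff_of_nonneg hterm).mp hz2 s0 hs0P
  have hsum : s0.sum id = k := (mem_A.mp hs0A).2
  have hpos : (0:ℚ) < (n:ℚ)*(n+1) - 4*(s0.sum id : ℕ) := by
    rw [hsum]
    have : (4*k : ℚ) < (n:ℚ)*(n+1) := by exact_mod_cast hk
    linarith
  have hmu := mu_pos hs0P
  have : μ n s0 * (((n:ℚ)*(n+1) - 4*(s0.sum id : ℕ)) * (x s0 * x s0)) > 0 := by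
    apply mul_pos hmu
    apply mul_pos hpos
    exact mul_self_pos.mpr hs0
  linarith

/-- extend a function on level k by zero -/
noncomputable def ext (n k : ℕ) (x : ↥(A n k) → ℚ) : Finset ℕ → ℚ :=
  fun s => if h : s ∈ A n k then x ⟨s, h⟩ else 0

lemma ext_support {n k : ℕ} (x : ↥(A n k) → ℚ) : ∀ s, ext n k x s ≠ 0 → s ∈ A n k := by
  intro s h
  by_contra hc
  simp [ext, hc] at h

noncomputable def Phi (n k : ℕ) : (↥(A n k) → ℚ) →ₗ[ℚ] (↥(A n (k+1)) → ℚ) where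
  toFun x := fun t => E n (ext n k x) t.val
  map_add' x y := by
    funext t
    show E n (ext n k (x + y)) t.val = E n (ext n k x) t.val + E n (ext n k y) t.val
    unfold E
    rw [← Finset.sum_add_distrib]
    refine Finset.sum_congr rfl fun i _ => ?_
    by_cases h : canDown i t.val
    · simp only [h, if_true, reduceIte, ext]
      by_cases h2 : down i t.val ∈ A n k <;> simp [h2]
    · simp [h]
  map_smul' c x := by
    funext t
    show E n (ext n k (c • x)) t.val = c * E n (ext n k x) t.val
    unfold E
    rw [Finset.mul_sum]
    refine Finset.sum_congr rfl fun i _ => ?_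
    by_cases h : canDown i t.val
    · simp only [h, if_true, reduceIte, ext]
      by_cases h2 : down i t.val ∈ A n k <;> simp [h2]
    · simp [h]

lemma Phi_injective {n k : ℕ} (hk : 4*k < n*(n+1)) : Function.Injective (Phi n k) := by
  rw [injective_iff_map_eq_zero]
  intro x hx0
  have hEzero : ∀ t, E n (ext n k x) t = 0 := by
    intro t
    by_cases ht : t ∈ A n (k+1)
    · have := congrFun hx0 (⟨t, ht⟩ : ↥(A n (k+1)))
      exact this
    · by_contra hc
      exact ht (E_support (ext_support x) hc)
  have hall := E_injective hk (ext_support x) hEzero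
  funext s
  have := hall s.val
  simpa [ext, s.prop] using this

lemma core {n k : ℕ} (hk : 4*k < n*(n+1)) : (A n k).card ≤ (A n (k+1)).card := by
  have h1 : Module.finrank ℚ (↥(A n k) → ℚ) ≤ Module.finrank ℚ (↥(A n (k+1)) → ℚ) :=
    LinearMap.finrank_le_finrank_of_injective (Phi_injective hk)
  rwa [Module.finrank_pi, Module.finrank_pi, Fintype.card_coe, Fintype.card_coe] at h1

lemma gauss (n : ℕ) : (Finset.Icc 1 n).sum id = n*(n+1)/2 := by
  induction n with
  | zero => simp
  | succ n ih =>
    have : Finset.Icc 1 (n+1) = insert (n+1) (Finset.Icc 1 n) := by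
      ext a; simp [Finset.mem_Icc, Finset.mem_insert]; omega
    rw [this, Finset.sum_insert (by simp [Finset.mem_Icc])]
    simp only [id] at ih ⊢
    have h2 : (n+1)*(n+1+1) = n*(n+1) + 2*(n+1) := by ring
    omega

lemma symm {n k : ℕ} (hk : k ≤ n*(n+1)/2) :
    (A n k).card = (A n (n*(n+1)/2 - k)).card := by
  apply Finset.card_bij (fun s _ => Finset.Icc 1 n \ s)
  · intro s hs
    rw [mem_A] at hs ⊢
    obtain ⟨hsP, hsum⟩ := hs
    simp only [P, Finset.mem_powerset] at hsP ⊢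
    refine ⟨Finset.sdiff_subset, ?_⟩
    have h1 := Finset.sum_sdiff (f := id) hsP
    have hg := gauss n
    simp only [id] at h1 hg hsum ⊢
    omega
  · intro s hs t ht heq
    rw [mem_A] at hs ht
    have hsP : s ⊆ Finset.Icc 1 n := by
      have := hs.1; simpa [P, Finset.mem_powerset] using this
    have htP : t ⊆ Finset.Icc 1 n := by
      have := ht.1; simpa [P, Finset.mem_powerset] using this
    have : Finset.Icc 1 n \ (Finset.Icc 1 n \ s) = Finset.Icc 1 n \ (Finset.Icc 1 n \ t) := by
      rw [heq]
    rwa [Finset.sdiff_sdiff_eq_self hsP, Finset.sdiff_sdiff_eq_self htP] at this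
  · intro t ht
    rw [mem_A] at ht
    obtain ⟨htP, hsum⟩ := ht
    simp only [P, Finset.mem_powerset] at htP
    refine ⟨Finset.Icc 1 n \ t, ?_, ?_⟩
    · rw [mem_A]
      simp only [P, Finset.mem_powerset]
      refine ⟨Finset.sdiff_subset, ?_⟩
      have h1 := Finset.sum_sdiff (f := id) htP
      have hg := gauss n
      simp only [id] at h1 hg hsum ⊢
      omega
    · exact Finset.sdiff_sdiff_eq_self htP

lemma levelCard_eq (n k : ℕ) : levelCard n k = (A n k).card := rfl

lemma step_up {n k : ℕ} (h : 4*k < n*(n+1)) : levelCard n k ≤ levelCard n (k+1) := by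
  rw [levelCard_eq, levelCard_eq]; exact core h

lemma two_dvd_nn1 (n : ℕ) : n*(n+1)/2*2 = n*(n+1) :=
  Nat.div_mul_cancel (even_iff_two_dvd.mp (Nat.even_mul_succ_self n))

lemma step_down {n k : ℕ} (hj : (n*(n+1)/2+1)/2 ≤ k) (hk : k+1 ≤ n*(n+1)/2) :
    levelCard n (k+1) ≤ levelCard n k := by
  have h2N := two_dvd_nn1 n
  set N := n*(n+1)/2 with hN
  rw [levelCard_eq, levelCard_eq]
  have e1 : (A n k).card = (A n (N - k)).card := symm (by omega)
  have e2 : (A n (k+1)).card = (A n (N - (k+1))).card := symm (by omega)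
  rw [e1, e2]
  have e3 : N - (k+1) + 1 = N - k := by omega
  have := core (n := n) (k := N - (k+1)) (by omega)
  rwa [e3] at this

end Stmt12

/-- Rank unimodality of the rank levels of `(P([n]), ⪯₂)`: writing `pᵢ` for the
number of subsets of `{1,…,n}` summing to `i`, there is a `j` such that
`p₀ ≤ p₁ ≤ ⋯ ≤ p_j` and `p_j ≥ p_{j+1} ≥ ⋯ ≥ p_{n(n+1)/2}`. -/
theorem stmt12 (n : ℕ) :
    ∃ j : ℕ, j ≤ n * (n + 1) / 2 ∧
      (∀ a b : ℕ, a ≤ b → b ≤ j → levelCard n a ≤ levelCard n b) ∧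
      (∀ a b : ℕ, j ≤ a → a ≤ b → b ≤ n * (n + 1) / 2 →
        levelCard n b ≤ levelCard n a) := by
  have h2N := Stmt12.two_dvd_nn1 n
  refine ⟨(n*(n+1)/2 + 1)/2, by omega, ?_, ?_⟩
  · intro a b hab
    induction hab with
    | refl => intro _; exact le_refl _
    | @step b' hb' ih =>
      intro hbj
      exact le_trans (ih (by omega)) (Stmt12.step_up (n := n) (k := b') (by omega))
  · intro a b ha hab
    induction hab with
    | refl => intro _; exact le_refl _
    | @step b' hb' ih =>
      intro hbN
      have hab2 : a ≤ b' := hb'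
      have s1 : (n*(n+1)/2+1)/2 ≤ b' := by omega
      have s2 : b'+1 ≤ n*(n+1)/2 := by omega
      have s3 : b' ≤ n*(n+1)/2 := by omega
      exact le_trans (Stmt12.step_down (n := n) (k := b') s1 s2) (ih s3)
end

section
/- Let n ≥ 1 with n ≡ 0 (mod 4) or n ≡ 3 (mod 4). Then M(n) equals S(n), where S(n) is the number of sign choices ε : {1,...,n} → {−1, +1} such that Σ_{i=1}^{n} ε(i)·i = 0. -/
/-- `S n`: the number of sign choices `ε : {1,…,n} → {−1,+1}` (here `ℤˣ`, the
units of `ℤ`, i.e. `{−1, +1}`, with position `i : Fin n` standing for the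
integer `i + 1`) whose signed sum `Σ_{i=1}^{n} ε(i)·i` is zero. -/
def S (n : ℕ) : ℕ :=
  Fintype.card {ε : Fin n → ℤˣ // ∑ i : Fin n, (ε i : ℤ) * ((i : ℕ) + 1) = 0}

namespace SubsetSl2

open Finset

/-- the level set -/
def lset (n K : ℕ) : Finset (Finset ℕ) :=
  ((Finset.Icc 1 n).powerset).filter (fun s => s.sum id = K)

lemma levelCard_eq (n K : ℕ) : levelCard n K = (lset n K).card := rfl

lemma mem_lset {n K : ℕ} {s : Finset ℕ} :
    s ∈ lset n K ↔ s ⊆ Finset.Icc 1 n ∧ s.sum id = K := by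
  simp [lset]

/-- elementary raising operator: flip `1` in (pullback form). -/
def U0 (f : Finset ℕ → ℚ) (s : Finset ℕ) : ℚ :=
  if 1 ∈ s then f (s.erase 1) else 0

/-- raising swap operators: move `k` to `k+1`, summed (pullback form). -/
def US (n : ℕ) (f : Finset ℕ → ℚ) (s : Finset ℕ) : ℚ :=
  ∑ k ∈ Finset.Icc 1 (n-1),
    (if k+1 ∈ s ∧ k ∉ s then f (insert k (s.erase (k+1))) else 0)

def dcoef (n k : ℕ) : ℚ := 2*(n:ℚ)*(n+1) - 2*(k:ℚ)*(k+1)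

/-- elementary lowering operator: flip `1` out (pullback form). -/
def D0 (n : ℕ) (f : Finset ℕ → ℚ) (s : Finset ℕ) : ℚ :=
  ((n:ℚ)*(n+1)) * (if 1 ∉ s then f (insert 1 s) else 0)

/-- lowering swap operators: move `k+1` to `k`, summed with coefficients. -/
def DS (n : ℕ) (f : Finset ℕ → ℚ) (s : Finset ℕ) : ℚ :=
  ∑ k ∈ Finset.Icc 1 (n-1),
    dcoef n k * (if k ∈ s ∧ k+1 ∉ s then f (insert (k+1) (s.erase k)) else 0)

def Uop (n : ℕ) (f : Finset ℕ → ℚ) (s : Finset ℕ) : ℚ := U0 f s + US n f s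

def Dop (n : ℕ) (f : Finset ℕ → ℚ) (s : Finset ℕ) : ℚ := D0 n f s + DS n f s


lemma ite_add (c : Prop) [Decidable c] (a b : ℚ) :
    (if c then a + b else 0) = (if c then a else 0) + (if c then b else 0) := by
  split_ifs <;> simp

lemma L1 (n : ℕ) (f : Finset ℕ → ℚ) (s : Finset ℕ) :
    U0 (D0 n f) s - D0 n (U0 f) s
      = ((n:ℚ)*(n+1)) * (if 1 ∈ s then 1 else -1) * f s := by
  by_cases h : 1 ∈ s
  · simp [U0, D0, h, Finset.insert_erase, Finset.notMem_erase]
  · simp [U0, D0, h, Finset.erase_insert]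

lemma L2 (n : ℕ) (f : Finset ℕ → ℚ) (s : Finset ℕ) :
    U0 (DS n f) s = DS n (U0 f) s := by
  have expand : U0 (DS n f) s = ∑ k ∈ Finset.Icc 1 (n-1),
      (if 1 ∈ s then dcoef n k *
        (if k ∈ s.erase 1 ∧ k+1 ∉ s.erase 1 then f (insert (k+1) ((s.erase 1).erase k)) else 0)
       else 0) := by
    simp only [U0, DS]
    split_ifs with h1 <;> simp
  rw [expand]
  unfold DS U0
  apply Finset.sum_congr rfl
  intro k hk
  obtain ⟨hk1, hk2⟩ := Finset.mem_Icc.mp hk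
  by_cases e1 : k = 1
  · subst e1
    by_cases h1 : 1 ∈ s <;>
      simp [Finset.mem_erase, Finset.mem_insert, h1]
  · have h2 : 2 ≤ k := by omega
    have hset : insert (k+1) ((s.erase 1).erase k) = (insert (k+1) (s.erase k)).erase 1 := by
      ext x
      by_cases hx : x ∈ s <;>
        simp [Finset.mem_insert, Finset.mem_erase, hx] <;> omega
    rw [hset]
    by_cases h1 : 1 ∈ s <;> by_cases hks : k ∈ s <;> by_cases hk1s : k+1 ∈ s <;>
      simp [Finset.mem_erase, Finset.mem_insert, h1, hks, hk1s,
        (by omega : ¬ k = 1), (by omega : ¬ k+1 = 1), (by omega : ¬ k = 0),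
        (by omega : ¬ 1 = k), (by omega : ¬ 1 = k + 1)] <;>
      try (intros; first | omega | (split_ifs <;> first | rfl | omega))

lemma L3 (n : ℕ) (f : Finset ℕ → ℚ) (s : Finset ℕ) :
    US n (D0 n f) s = D0 n (US n f) s := by
  have expand : D0 n (US n f) s = ∑ j ∈ Finset.Icc 1 (n-1),
      (if 1 ∉ s then ((n:ℚ)*(n+1)) *
        (if j+1 ∈ insert 1 s ∧ j ∉ insert 1 s then f (insert j ((insert 1 s).erase (j+1))) else 0)
       else 0) := by
    simp only [D0, US]
    split_ifs with h1 <;> simp [Finset.mul_sum]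
  rw [expand]
  unfold US D0
  apply Finset.sum_congr rfl
  intro j hk
  obtain ⟨hk1, hk2⟩ := Finset.mem_Icc.mp hk
  by_cases e1 : j = 1
  · subst e1
    by_cases h1 : 1 ∈ s <;>
      simp [Finset.mem_erase, Finset.mem_insert, h1]
  · have h2 : 2 ≤ j := by omega
    have hset : insert 1 (insert j (s.erase (j+1))) = insert j ((insert 1 s).erase (j+1)) := by
      ext x
      by_cases hx : x ∈ s <;>
        simp [Finset.mem_insert, Finset.mem_erase, hx] <;> omega
    rw [hset]
    by_cases h1 : 1 ∈ s <;> by_cases hjs : j ∈ s <;> by_cases hj1s : j+1 ∈ s <;>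
      simp [Finset.mem_erase, Finset.mem_insert, h1, hjs, hj1s,
        (by omega : ¬ j = 1), (by omega : ¬ j+1 = 1), (by omega : ¬ j = 0),
        (by omega : ¬ 1 = j), (by omega : ¬ 1 = j + 1)] <;>
      try (intros; first | omega | (split_ifs <;> first | rfl | omega))

lemma L4 (n : ℕ) (f : Finset ℕ → ℚ) (s : Finset ℕ) :
    US n (DS n f) s - DS n (US n f) s
      = (∑ k ∈ Finset.Icc 1 (n-1), dcoef n k *
          ((if k+1 ∈ s then (1:ℚ) else 0) - (if k ∈ s then (1:ℚ) else 0))) * f s := by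
  have e1 : US n (DS n f) s = ∑ j ∈ Finset.Icc 1 (n-1), ∑ k ∈ Finset.Icc 1 (n-1),
      (if j+1 ∈ s ∧ j ∉ s then dcoef n k *
        (if k ∈ insert j (s.erase (j+1)) ∧ k+1 ∉ insert j (s.erase (j+1))
         then f (insert (k+1) ((insert j (s.erase (j+1))).erase k)) else 0) else 0) := by
    simp only [US, DS]
    apply Finset.sum_congr rfl
    intro j _
    split_ifs <;> simp
  have e2 : DS n (US n f) s = ∑ j ∈ Finset.Icc 1 (n-1), ∑ k ∈ Finset.Icc 1 (n-1),
      (if k ∈ s ∧ k+1 ∉ s then dcoef n k *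
        (if j+1 ∈ insert (k+1) (s.erase k) ∧ j ∉ insert (k+1) (s.erase k)
         then f (insert j ((insert (k+1) (s.erase k)).erase (j+1))) else 0) else 0) := by
    simp only [DS, US]
    rw [Finset.sum_comm]
    apply Finset.sum_congr rfl
    intro k _
    split_ifs <;> simp [Finset.mul_sum]
  rw [e1, e2, ← Finset.sum_sub_distrib]
  have key : ∀ j ∈ Finset.Icc 1 (n-1), ∀ k ∈ Finset.Icc 1 (n-1),
      (if j+1 ∈ s ∧ j ∉ s then dcoef n k *
        (if k ∈ insert j (s.erase (j+1)) ∧ k+1 ∉ insert j (s.erase (j+1))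
         then f (insert (k+1) ((insert j (s.erase (j+1))).erase k)) else 0) else 0)
    - (if k ∈ s ∧ k+1 ∉ s then dcoef n k *
        (if j+1 ∈ insert (k+1) (s.erase k) ∧ j ∉ insert (k+1) (s.erase k)
         then f (insert j ((insert (k+1) (s.erase k)).erase (j+1))) else 0) else 0)
    = (if j = k then dcoef n k *
        ((if k+1 ∈ s then (1:ℚ) else 0) - (if k ∈ s then (1:ℚ) else 0)) * f s else 0) := by
    intro j hj k hk
    obtain ⟨hj1, hj2⟩ := Finset.mem_Icc.mp hj
    obtain ⟨hk1, hk2⟩ := Finset.mem_Icc.mp hk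
    by_cases hjk : j = k
    · subst hjk
      by_cases hks : j ∈ s <;> by_cases hk1s : j+1 ∈ s
      · simp [hks, hk1s]
      · have hA : (insert (j+1) (s.erase j)).erase (j+1) = s.erase j := by
          apply Finset.erase_insert
          simp [Finset.mem_erase, hk1s]
        have hB : insert j (s.erase j) = s := Finset.insert_erase hks
        simp only [hA, hB]
        simp [Finset.mem_insert, Finset.mem_erase, hks, hk1s, (by omega : ¬ j+1 = j),
          (by omega : ¬ j = j + 1)]
        try ring
      · have hA : (insert j (s.erase (j+1))).erase j = s.erase (j+1) := by
          apply Finset.erase_insert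
          simp [Finset.mem_erase, hks]
        have hB : insert (j+1) (s.erase (j+1)) = s := Finset.insert_erase hk1s
        simp only [hA]
        simp [Finset.mem_insert, Finset.mem_erase, hks, hk1s, (by omega : ¬ j+1 = j),
          (by omega : ¬ j = j + 1), hB]
        try ring
      · simp [hks, hk1s]
    · by_cases hd1 : j = k+1
      · subst hd1
        simp [Finset.mem_insert, Finset.mem_erase, hjk]
      · by_cases hd2 : k = j+1
        · subst hd2
          simp [Finset.mem_insert, Finset.mem_erase, hjk, (by omega : ¬ j+1 = j)]
        · have hset : insert (k+1) ((insert j (s.erase (j+1))).erase k)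
              = insert j ((insert (k+1) (s.erase k)).erase (j+1)) := by
            ext x
            by_cases hx : x ∈ s <;>
              simp [Finset.mem_insert, Finset.mem_erase, hx] <;> omega
          have c1 : (k ∈ insert j (s.erase (j+1)) ∧ k+1 ∉ insert j (s.erase (j+1)))
              ↔ (k ∈ s ∧ k+1 ∉ s) := by
            by_cases hks : k ∈ s <;> by_cases hk1s : k+1 ∈ s <;>
              simp [Finset.mem_insert, Finset.mem_erase, hks, hk1s] <;> omega
          have c2 : (j+1 ∈ insert (k+1) (s.erase k) ∧ j ∉ insert (k+1) (s.erase k))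
              ↔ (j+1 ∈ s ∧ j ∉ s) := by
            by_cases hjs : j ∈ s <;> by_cases hj1s : j+1 ∈ s <;>
              simp [Finset.mem_insert, Finset.mem_erase, hjs, hj1s] <;> omega
          simp only [hset, c1, c2, if_neg hjk]
          split_ifs <;> ring
  trans (∑ j ∈ Finset.Icc 1 (n-1), ∑ k ∈ Finset.Icc 1 (n-1),
      (if j = k then dcoef n k *
        ((if k+1 ∈ s then (1:ℚ) else 0) - (if k ∈ s then (1:ℚ) else 0)) * f s else 0))
  · apply Finset.sum_congr rfl
    intro j hj
    rw [← Finset.sum_sub_distrib]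
    exact Finset.sum_congr rfl (fun k hk => key j hj k hk)
  · rw [Finset.sum_mul]
    apply Finset.sum_congr rfl
    intro j hj
    rw [Finset.sum_ite_eq, if_pos hj]

lemma L5 (n : ℕ) (s : Finset ℕ) (hn : 1 ≤ n) (hs : s ⊆ Finset.Icc 1 n) :
    ((n:ℚ)*(n+1)) * (if 1 ∈ s then (1:ℚ) else -1)
      + ∑ k ∈ Finset.Icc 1 (n-1), dcoef n k *
          ((if k+1 ∈ s then (1:ℚ) else 0) - (if k ∈ s then (1:ℚ) else 0))
      = 4*((s.sum id : ℕ) : ℚ) - (n:ℚ)*(n+1) := by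
  classical
  set ind : ℕ → ℚ := fun m => if m ∈ s then 1 else 0 with hind
  have hsplit : ∑ k ∈ Finset.Icc 1 (n-1), dcoef n k *
      ((if k+1 ∈ s then (1:ℚ) else 0) - (if k ∈ s then (1:ℚ) else 0))
      = (∑ k ∈ Finset.Icc 1 (n-1), dcoef n k * ind (k+1))
        - (∑ k ∈ Finset.Icc 1 (n-1), dcoef n k * ind k) := by
    rw [← Finset.sum_sub_distrib]
    apply Finset.sum_congr rfl
    intro k _
    simp only [ind]
    ring
  have hA : ∑ k ∈ Finset.Icc 1 (n-1), dcoef n k * ind (k+1)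
      = ∑ m ∈ Finset.Icc 2 n, dcoef n (m-1) * ind m := by
    have hmap : Finset.Icc 2 n = (Finset.Icc 1 (n-1)).map (addRightEmbedding 1) := by
      rw [Finset.map_add_right_Icc]
      congr 1
      omega
    rw [hmap, Finset.sum_map]
    apply Finset.sum_congr rfl
    intro k _
    simp [addRightEmbedding]
  have hIcc1 : Finset.Icc 1 n = insert 1 (Finset.Icc 2 n) := by
    ext x; simp [Finset.mem_Icc, Finset.mem_insert]; omega
  have hIcc2 : Finset.Icc 1 n = insert n (Finset.Icc 1 (n-1)) := by
    ext x; simp [Finset.mem_Icc, Finset.mem_insert]; omega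
  have h1notin : (1:ℕ) ∉ Finset.Icc 2 n := by simp
  have hnnotin : n ∉ Finset.Icc 1 (n-1) := by simp; omega
  have hA2 : ∑ m ∈ Finset.Icc 1 n, dcoef n (m-1) * ind m
      = dcoef n 0 * ind 1 + ∑ m ∈ Finset.Icc 2 n, dcoef n (m-1) * ind m := by
    rw [hIcc1, Finset.sum_insert h1notin]
  have hB2 : ∑ m ∈ Finset.Icc 1 n, dcoef n m * ind m
      = dcoef n n * ind n + ∑ m ∈ Finset.Icc 1 (n-1), dcoef n m * ind m := by
    rw [hIcc2, Finset.sum_insert hnnotin]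
  have hdiff : (∑ m ∈ Finset.Icc 1 n, dcoef n (m-1) * ind m)
      - (∑ m ∈ Finset.Icc 1 n, dcoef n m * ind m)
      = ∑ m ∈ Finset.Icc 1 n, (4*(m:ℚ)) * ind m := by
    rw [← Finset.sum_sub_distrib]
    apply Finset.sum_congr rfl
    intro m hm
    have h1m : 1 ≤ m := (Finset.mem_Icc.mp hm).1
    have hcast : ((m-1:ℕ):ℚ) = (m:ℚ) - 1 := by
      rw [Nat.cast_sub h1m]; simp
    simp only [dcoef, hcast]
    ring
  have hsum4 : ∑ m ∈ Finset.Icc 1 n, (4*(m:ℚ)) * ind m = 4*((s.sum id : ℕ) : ℚ) := by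
    have e : ∀ m ∈ Finset.Icc 1 n, (4*(m:ℚ)) * ind m = if m ∈ s then 4*(m:ℚ) else 0 := by
      intro m _
      simp only [ind, mul_ite, mul_one, mul_zero]
    rw [Finset.sum_congr rfl e, Finset.sum_ite_mem, Finset.inter_eq_right.mpr hs]
    rw [Nat.cast_sum, Finset.mul_sum]
    apply Finset.sum_congr rfl
    intro m _
    simp
  have hdc0 : dcoef n 0 = 2*(n:ℚ)*(n+1) := by simp [dcoef]
  have hdcn : dcoef n n = 0 := by simp [dcoef]
  have hchi : ((n:ℚ)*(n+1)) * (if 1 ∈ s then (1:ℚ) else -1)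
      = 2*((n:ℚ)*(n+1)) * ind 1 - (n:ℚ)*(n+1) := by
    simp only [ind]
    split_ifs <;> ring
  rw [hsplit, hA, hchi]
  have hAeq : ∑ m ∈ Finset.Icc 2 n, dcoef n (m-1) * ind m
      = (∑ m ∈ Finset.Icc 1 n, dcoef n (m-1) * ind m) - dcoef n 0 * ind 1 := by
    rw [hA2]; ring
  have hBeq : ∑ m ∈ Finset.Icc 1 (n-1), dcoef n m * ind m
      = (∑ m ∈ Finset.Icc 1 n, dcoef n m * ind m) - dcoef n n * ind n := by
    rw [hB2]; ring
  rw [hAeq, hBeq, hdc0, hdcn]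
  have : (∑ m ∈ Finset.Icc 1 n, dcoef n (m-1) * ind m)
      - (∑ m ∈ Finset.Icc 1 n, dcoef n m * ind m) = 4*((s.sum id : ℕ) : ℚ) := by
    rw [hdiff, hsum4]
  linarith [this]

/-- support predicate: supported on subsets of `Icc 1 n` with (integer) level `m` -/
def lvlZ (n : ℕ) (m : ℤ) (v : Finset ℕ → ℚ) : Prop :=
  ∀ s, v s ≠ 0 → s ⊆ Finset.Icc 1 n ∧ ((s.sum id : ℕ) : ℤ) = m

lemma comm (n : ℕ) (hn : 1 ≤ n) {m : ℤ} (v : Finset ℕ → ℚ) (hv : lvlZ n m v) :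
    Uop n (Dop n v) = fun s => Dop n (Uop n v) s + ((4*m - (n:ℤ)*(n+1) : ℤ) : ℚ) * v s := by
  funext s
  have h1 : U0 (Dop n v) s = U0 (D0 n v) s + U0 (DS n v) s := by
    simp only [U0, Dop, ite_add]
  have h2 : US n (Dop n v) s = US n (D0 n v) s + US n (DS n v) s := by
    simp only [US, Dop, ite_add, Finset.sum_add_distrib]
  have h3 : D0 n (Uop n v) s = D0 n (U0 v) s + D0 n (US n v) s := by
    simp only [D0, Uop, ite_add, mul_add]
  have h4 : DS n (Uop n v) s = DS n (U0 v) s + DS n (US n v) s := by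
    have e : ∀ k ∈ Finset.Icc 1 (n-1), dcoef n k *
        (if k ∈ s ∧ k+1 ∉ s then Uop n v (insert (k+1) (s.erase k)) else 0)
        = dcoef n k * (if k ∈ s ∧ k+1 ∉ s then U0 v (insert (k+1) (s.erase k)) else 0)
          + dcoef n k * (if k ∈ s ∧ k+1 ∉ s then US n v (insert (k+1) (s.erase k)) else 0) := by
      intro k _
      simp only [Uop, ite_add, mul_add]
    simp only [DS, Finset.sum_congr rfl e, Finset.sum_add_distrib]
  have expand : Uop n (Dop n v) s - Dop n (Uop n v) s
      = (U0 (D0 n v) s - D0 n (U0 v) s) + (U0 (DS n v) s - DS n (U0 v) s)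
        + (US n (D0 n v) s - D0 n (US n v) s) + (US n (DS n v) s - DS n (US n v) s) := by
    have hu : Uop n (Dop n v) s = U0 (Dop n v) s + US n (Dop n v) s := rfl
    have hd : Dop n (Uop n v) s = D0 n (Uop n v) s + DS n (Uop n v) s := rfl
    rw [hu, hd, h1, h2, h3, h4]
    ring
  have final : Uop n (Dop n v) s - Dop n (Uop n v) s
      = ((4*m - (n:ℤ)*(n+1) : ℤ) : ℚ) * v s := by
    rw [expand, L1, L2, L3, L4]
    by_cases hvs : v s = 0
    · rw [hvs]; ring
    · obtain ⟨hsub, hsum⟩ := hv s hvs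
      have hcast : ((s.sum id : ℕ):ℚ) = ((m:ℤ):ℚ) := by exact_mod_cast hsum
      have h5 := L5 n s hn hsub
      rw [hcast] at h5
      have h5' : ((n:ℚ)*(n+1)) * (if 1 ∈ s then (1:ℚ) else -1)
          + ∑ k ∈ Finset.Icc 1 (n-1), dcoef n k *
            ((if k+1 ∈ s then (1:ℚ) else 0) - (if k ∈ s then (1:ℚ) else 0))
          = ((4*m - (n:ℤ)*(n+1) : ℤ) : ℚ) := by
        rw [h5]
        push_cast
        ring
      linear_combination (v s) * h5'
  linarith [final]

lemma lvlZ_U (n : ℕ) (hn : 1 ≤ n) {m : ℤ} {v : Finset ℕ → ℚ} (hv : lvlZ n m v) :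
    lvlZ n (m+1) (Uop n v) := by
  intro s hs
  have hor : U0 v s ≠ 0 ∨ US n v s ≠ 0 := by
    by_contra h
    push_neg at h
    exact hs (by simp [Uop, h.1, h.2])
  rcases hor with h | h
  · have h1s : 1 ∈ s := by
      by_contra h1
      exact h (by simp [U0, h1])
    have hv' : v (s.erase 1) ≠ 0 := by
      intro hz
      exact h (by simp [U0, h1s, hz])
    obtain ⟨hsub, hsum⟩ := hv _ hv'
    constructor
    · intro x hx
      by_cases hx1 : x = 1
      · subst hx1; simp [Finset.mem_Icc]; omega
      · exact hsub (Finset.mem_erase.mpr ⟨hx1, hx⟩)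
    · have := Finset.sum_erase_add s id h1s
      simp only [Function.id_def] at *
      omega
  · obtain ⟨k, hk, hterm⟩ := Finset.exists_ne_zero_of_sum_ne_zero h
    obtain ⟨hk1, hk2⟩ := Finset.mem_Icc.mp hk
    have hcond : k+1 ∈ s ∧ k ∉ s := by
      by_contra hc
      exact hterm (by simp [hc])
    obtain ⟨hk1s, hks⟩ := hcond
    have hv' : v (insert k (s.erase (k+1))) ≠ 0 := by
      intro hz
      exact hterm (by simp [hk1s, hks, hz])
    obtain ⟨hsub, hsum⟩ := hv _ hv'
    have hknotin : k ∉ s.erase (k+1) := by simp [Finset.mem_erase, hks]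
    constructor
    · intro x hx
      by_cases hx1 : x = k+1
      · subst hx1; simp [Finset.mem_Icc]; omega
      · exact hsub (Finset.mem_insert_of_mem (Finset.mem_erase.mpr ⟨hx1, hx⟩))
    · have e1 : (insert k (s.erase (k+1))).sum id = id k + (s.erase (k+1)).sum id :=
        Finset.sum_insert hknotin
      have e2 := Finset.sum_erase_add s id hk1s
      simp only [Function.id_def] at *
      omega

lemma lvlZ_D (n : ℕ) {m : ℤ} {v : Finset ℕ → ℚ} (hv : lvlZ n m v) :
    lvlZ n (m-1) (Dop n v) := by
  intro s hs
  have hor : D0 n v s ≠ 0 ∨ DS n v s ≠ 0 := by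
    by_contra h
    push_neg at h
    exact hs (by simp [Dop, h.1, h.2])
  rcases hor with h | h
  · have h1s : 1 ∉ s := by
      intro h1
      exact h (by simp [D0, h1])
    have hv' : v (insert 1 s) ≠ 0 := by
      intro hz
      exact h (by simp [D0, h1s, hz])
    obtain ⟨hsub, hsum⟩ := hv _ hv'
    constructor
    · exact fun x hx => hsub (Finset.mem_insert_of_mem hx)
    · have e1 : (insert 1 s).sum id = id 1 + s.sum id := Finset.sum_insert h1s
      simp only [Function.id_def] at *
      omega
  · obtain ⟨k, hk, hterm⟩ := Finset.exists_ne_zero_of_sum_ne_zero h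
    obtain ⟨hk1, hk2⟩ := Finset.mem_Icc.mp hk
    have hcond : k ∈ s ∧ k+1 ∉ s := by
      by_contra hc
      exact hterm (by simp [hc])
    obtain ⟨hks, hk1s⟩ := hcond
    have hv' : v (insert (k+1) (s.erase k)) ≠ 0 := by
      intro hz
      exact hterm (by simp [hks, hk1s, hz])
    obtain ⟨hsub, hsum⟩ := hv _ hv'
    have hknotin : k+1 ∉ s.erase k := by simp [Finset.mem_erase, hk1s]
    constructor
    · intro x hx
      by_cases hx1 : x = k
      · subst hx1
        have hn1 : 1 ≤ n := by omega
        simp [Finset.mem_Icc]; omega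
      · exact hsub (Finset.mem_insert_of_mem (Finset.mem_erase.mpr ⟨hx1, hx⟩))
    · have e1 : (insert (k+1) (s.erase k)).sum id = id (k+1) + (s.erase k).sum id :=
        Finset.sum_insert hknotin
      have e2 := Finset.sum_erase_add s id hks
      simp only [Function.id_def] at *
      omega

lemma lvlZ_neg (n : ℕ) {m : ℤ} (hm : m < 0) {v : Finset ℕ → ℚ} (hv : lvlZ n m v) :
    v = 0 := by
  funext s
  by_contra h
  have := (hv s h).2
  omega

lemma Uop_zero (n : ℕ) : Uop n 0 = 0 := by
  funext s; simp [Uop, U0, US]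
lemma Dop_zero (n : ℕ) : Dop n 0 = 0 := by
  funext s; simp [Dop, D0, DS]
lemma Uop_smul (n : ℕ) (c : ℚ) (f : Finset ℕ → ℚ) : Uop n (c • f) = c • Uop n f := by
  funext s
  simp only [Uop, U0, US, Pi.smul_apply, smul_eq_mul, mul_add, Finset.mul_sum, mul_ite, mul_zero]
lemma Dop_smul (n : ℕ) (c : ℚ) (f : Finset ℕ → ℚ) : Dop n (c • f) = c • Dop n f := by
  funext s
  simp only [Dop, D0, DS, Pi.smul_apply, smul_eq_mul, mul_add, Finset.mul_sum]
  congr 1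
  · split_ifs <;> ring
  · apply Finset.sum_congr rfl; intro k _; split_ifs <;> ring
lemma Uop_add (n : ℕ) (f g : Finset ℕ → ℚ) : Uop n (f + g) = Uop n f + Uop n g := by
  funext s
  simp only [Uop, U0, US, Pi.add_apply, ite_add, Finset.sum_add_distrib]
  ring

/-- key injectivity via sl2 descent -/
lemma U_inj (n : ℕ) (hn : 1 ≤ n) (K : ℕ) (hK : 4*K < n*(n+1))
    (v : Finset ℕ → ℚ) (hv : lvlZ n K v) (h0 : Uop n v = 0) : v = 0 := by
  set μ : ℚ := 4*(K:ℚ) - (n:ℚ)*(n+1) with hμ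
  have hμneg : μ < 0 := by
    have h' : ((4*K : ℕ) : ℚ) < ((n*(n+1) : ℕ) : ℚ) := by exact_mod_cast hK
    push_cast at h'
    rw [hμ]
    linarith
  have hlvl : ∀ j : ℕ, lvlZ n ((K:ℤ) - j) ((Dop n)^[j] v) := by
    intro j
    induction j with
    | zero => simpa using hv
    | succ j ih =>
      rw [Function.iterate_succ_apply']
      push_cast
      have e : (K:ℤ) - ((j:ℤ)+1) = ((K:ℤ) - j) - 1 := by ring
      rw [e]
      exact lvlZ_D n ih
  have hcomm : ∀ j : ℕ, Uop n ((Dop n)^[j+1] v)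
      = (((j:ℚ)+1) * (μ - 2*j)) • ((Dop n)^[j] v) := by
    intro j
    induction j with
    | zero =>
      have hc := comm n hn v hv
      rw [Function.iterate_one]
      rw [hc]
      funext s
      simp only [Function.iterate_zero, id_eq, Pi.smul_apply, smul_eq_mul, h0, Dop_zero,
        Pi.zero_apply]
      push_cast
      rw [hμ]
      ring
    | succ j ih =>
      have hc := comm n hn ((Dop n)^[j+1] v) (hlvl (j+1))
      rw [Function.iterate_succ_apply' (Dop n) (j+1) v, hc]
      funext s
      rw [ih, Dop_smul]
      rw [← Function.iterate_succ_apply' (Dop n) j v]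
      simp only [Pi.smul_apply, smul_eq_mul, Pi.add_apply]
      push_cast
      rw [hμ]
      ring
  have hzero : (Dop n)^[K+1] v = 0 := by
    apply lvlZ_neg n (m := (K:ℤ) - (K+1)) (by omega) (hlvl (K+1))
  have hdesc : ∀ i : ℕ, i ≤ K+1 → (Dop n)^[K+1-i] v = 0 := by
    intro i
    induction i with
    | zero => intro _; simpa using hzero
    | succ i ih =>
      intro hi
      have hprev := ih (by omega)
      have hj : K+1-i = (K-i)+1 := by omega
      rw [hj] at hprev
      have hU := hcomm (K-i)
      rw [hprev, Uop_zero] at hU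
      have hcne : (((K-i:ℕ):ℚ)+1) * (μ - 2*((K-i:ℕ):ℚ)) ≠ 0 := by
        apply mul_ne_zero
        · positivity
        · have h1 : (0:ℚ) ≤ ((K-i:ℕ):ℚ) := Nat.cast_nonneg _
          intro hz
          nlinarith
      have hz : (Dop n)^[K-i] v = 0 := by
        rcases smul_eq_zero.mp hU.symm with h | h
        · exact absurd h hcne
        · exact h
      rw [show K+1-(i+1) = K-i from by omega]
      exact hz
  have := hdesc (K+1) le_rfl
  simpa using this

/-- the step inequality -/
lemma step (n : ℕ) (hn : 1 ≤ n) (K : ℕ) (hK : 4*K < n*(n+1)) :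
    levelCard n K ≤ levelCard n (K+1) := by
  classical
  let ext : (↥(lset n K) → ℚ) → (Finset ℕ → ℚ) :=
    fun g s => if h : s ∈ lset n K then g ⟨s, h⟩ else 0
  have ext_lvl : ∀ g, lvlZ n K (ext g) := by
    intro g s hs
    by_cases h : s ∈ lset n K
    · obtain ⟨h1, h2⟩ := mem_lset.mp h
      exact ⟨h1, by exact_mod_cast h2⟩
    · exact absurd (by simp [ext, h]) hs
  have ext_add : ∀ g g', ext (g + g') = ext g + ext g' := by
    intro g g'
    funext s
    by_cases h : s ∈ lset n K <;> simp [ext, h]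
  have ext_smul : ∀ (c : ℚ) g, ext (c • g) = c • ext g := by
    intro c g
    funext s
    by_cases h : s ∈ lset n K <;> simp [ext, h]
  let Φ : (↥(lset n K) → ℚ) →ₗ[ℚ] (↥(lset n (K+1)) → ℚ) :=
    { toFun := fun g b => Uop n (ext g) b.1
      map_add' := by
        intro g g'
        funext b
        change Uop n (ext (g + g')) b.1 = Uop n (ext g) b.1 + Uop n (ext g') b.1
        rw [ext_add, Uop_add]
        rfl
      map_smul' := by
        intro c g
        funext b
        change Uop n (ext (c • g)) b.1 = c • Uop n (ext g) b.1
        rw [ext_smul, Uop_smul]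
        rfl }
  have hinj : Function.Injective Φ := by
    apply (injective_iff_map_eq_zero Φ).mpr
    intro g hg
    have hUz : Uop n (ext g) = 0 := by
      funext s
      by_cases h : s ∈ lset n (K+1)
      · exact congrFun hg ⟨s, h⟩
      · by_contra hne
        have hl := lvlZ_U n hn (ext_lvl g) s hne
        exact h (mem_lset.mpr ⟨hl.1, by exact_mod_cast hl.2⟩)
    have hext0 : ext g = 0 := U_inj n hn K hK (ext g) (ext_lvl g) hUz
    funext a
    have := congrFun hext0 a.1
    simpa [ext, a.2] using this
  have hrank := LinearMap.finrank_le_finrank_of_injective hinj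
  rw [Module.finrank_pi ℚ, Module.finrank_pi ℚ, Fintype.card_coe, Fintype.card_coe] at hrank
  exact hrank

lemma symm_lc (n : ℕ) (K K' : ℕ) (h : K + K' = (Finset.Icc 1 n).sum id) :
    levelCard n K = levelCard n K' := by
  rw [levelCard_eq, levelCard_eq]
  apply Finset.card_bij' (fun s _ => Finset.Icc 1 n \ s) (fun t _ => Finset.Icc 1 n \ t)
  · intro s hs
    obtain ⟨h1, h2⟩ := mem_lset.mp hs
    apply mem_lset.mpr
    refine ⟨Finset.sdiff_subset, ?_⟩
    have := Finset.sum_sdiff (f := id) h1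
    simp only [Function.id_def] at *
    omega
  · intro t ht
    obtain ⟨h1, h2⟩ := mem_lset.mp ht
    apply mem_lset.mpr
    refine ⟨Finset.sdiff_subset, ?_⟩
    have := Finset.sum_sdiff (f := id) h1
    simp only [Function.id_def] at *
    omega
  · intro s hs
    exact Finset.sdiff_sdiff_eq_self (mem_lset.mp hs).1
  · intro t ht
    exact Finset.sdiff_sdiff_eq_self (mem_lset.mp ht).1

lemma lc_zero (n : ℕ) (K : ℕ) (h : (Finset.Icc 1 n).sum id < K) : levelCard n K = 0 := by
  rw [levelCard_eq]
  apply Finset.card_eq_zero.mpr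
  rw [Finset.eq_empty_iff_forall_notMem]
  intro s hs
  obtain ⟨h1, h2⟩ := mem_lset.mp hs
  have := Finset.sum_le_sum_of_subset (f := id) h1
  simp only [Function.id_def] at *
  omega

lemma gauss (n : ℕ) : 2 * (Finset.Icc 1 n).sum id = n*(n+1) := by
  induction n with
  | zero => simp
  | succ n ih =>
    rw [Finset.sum_Icc_succ_top (by omega : 1 ≤ n+1)]
    have hid : id (n+1) = n+1 := rfl
    nlinarith [ih]

lemma S_eq (n : ℕ) (h : ℕ) (hh : 2*h = (Finset.Icc 1 n).sum id) :
    S n = levelCard n h := by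
  classical
  have hS : S n = (Finset.univ.filter
      (fun ε : Fin n → ℤˣ => ∑ i : Fin n, (ε i : ℤ) * ((i:ℕ)+1) = 0)).card := by
    simp [S, Fintype.card_subtype]
  rw [hS, levelCard_eq]
  clear hS
  have hran : ∀ m : ℕ, ∑ i ∈ Finset.range m, (i+1) = (Finset.Icc 1 m).sum id := by
    intro m
    induction m with
    | zero => simp
    | succ m ih =>
      rw [Finset.sum_range_succ, ih, Finset.sum_Icc_succ_top (by omega : 1 ≤ m+1)]
      simp [Function.id_def]
  have htot : ∑ i : Fin n, ((i:ℕ)+1) = (Finset.Icc 1 n).sum id := by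
    rw [Fin.sum_univ_eq_sum_range (fun i => i+1) n]
    exact hran n
  have hinj : ∀ (x y : Fin n), (x:ℕ)+1 = (y:ℕ)+1 → x = y := by
    intro x y hxy
    exact Fin.ext (by omega)
  have hform : ∀ ε : Fin n → ℤˣ, (∑ i : Fin n, (ε i : ℤ) * ((i:ℕ)+1))
      = 2*((∑ i ∈ Finset.univ.filter (fun i : Fin n => ε i = 1), ((i:ℕ)+1) : ℕ) : ℤ)
        - (((Finset.Icc 1 n).sum id : ℕ) : ℤ) := by
    intro ε
    rw [← Finset.sum_filter_add_sum_filter_not Finset.univ (fun i => ε i = 1)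
        (fun i => (ε i : ℤ) * ((i:ℕ)+1))]
    have e1 : ∑ i ∈ Finset.univ.filter (fun i : Fin n => ε i = 1), (ε i : ℤ) * ((i:ℕ)+1)
        = ∑ i ∈ Finset.univ.filter (fun i : Fin n => ε i = 1), (((i:ℕ):ℤ)+1) := by
      apply Finset.sum_congr rfl
      intro i hi
      rw [(Finset.mem_filter.mp hi).2]
      push_cast
      ring
    have e2 : ∑ i ∈ Finset.univ.filter (fun i : Fin n => ¬ ε i = 1), (ε i : ℤ) * ((i:ℕ)+1)
        = ∑ i ∈ Finset.univ.filter (fun i : Fin n => ¬ ε i = 1), -(((i:ℕ):ℤ)+1) := by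
      apply Finset.sum_congr rfl
      intro i hi
      have hne : ¬ ε i = 1 := (Finset.mem_filter.mp hi).2
      have hm1 : ε i = -1 := by
        rcases Int.units_eq_one_or (ε i) with h'|h'
        · exact absurd h' hne
        · exact h'
      rw [hm1]
      push_cast
      ring
    rw [e1, e2, Finset.sum_neg_distrib]
    have hFG : (∑ i ∈ Finset.univ.filter (fun i : Fin n => ε i = 1), (((i:ℕ):ℤ)+1))
        + (∑ i ∈ Finset.univ.filter (fun i : Fin n => ¬ ε i = 1), (((i:ℕ):ℤ)+1))
        = (((Finset.Icc 1 n).sum id : ℕ) : ℤ) := by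
      rw [Finset.sum_filter_add_sum_filter_not]
      rw [← htot]
      push_cast
      rfl
    have hcast : ((∑ i ∈ Finset.univ.filter (fun i : Fin n => ε i = 1), ((i:ℕ)+1) : ℕ) : ℤ)
        = ∑ i ∈ Finset.univ.filter (fun i : Fin n => ε i = 1), (((i:ℕ):ℤ)+1) := by
      push_cast
      rfl
    rw [hcast]
    omega
  have himg : ∀ t : Finset ℕ, t ⊆ Finset.Icc 1 n →
      (Finset.univ.filter (fun i : Fin n => (i:ℕ)+1 ∈ t)).image (fun i : Fin n => (i:ℕ)+1)
        = t := by
    intro t ht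
    ext x
    simp only [Finset.mem_image, Finset.mem_filter, Finset.mem_univ, true_and]
    constructor
    · rintro ⟨i, h1, rfl⟩
      exact h1
    · intro hx
      have hx' := Finset.mem_Icc.mp (ht hx)
      refine ⟨⟨x-1, by omega⟩, ?_, ?_⟩
      · simpa using (by rw [show (x-1)+1 = x from by omega]; exact hx : (x-1)+1 ∈ t)
      · show (x-1)+1 = x
        omega
  have hfcongr : ∀ t : Finset ℕ,
      (Finset.univ.filter (fun i : Fin n => (if (i:ℕ)+1 ∈ t then (1:ℤˣ) else -1) = 1))
        = Finset.univ.filter (fun i : Fin n => (i:ℕ)+1 ∈ t) := by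
    intro t
    apply Finset.filter_congr
    intro i _
    by_cases hit : (i:ℕ)+1 ∈ t <;> simp [hit]
  apply Finset.card_bij'
    (fun (ε : Fin n → ℤˣ) _ =>
      (Finset.univ.filter (fun i : Fin n => ε i = 1)).image (fun i : Fin n => (i:ℕ)+1))
    (fun t _ => (fun i : Fin n => if (i:ℕ)+1 ∈ t then (1:ℤˣ) else -1))
  · intro ε hε
    have hP := (Finset.mem_filter.mp hε).2
    apply mem_lset.mpr
    constructor
    · intro x hx
      obtain ⟨i, _, rfl⟩ := Finset.mem_image.mp hx
      simp [Finset.mem_Icc]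
    · have hsum : ((Finset.univ.filter (fun i : Fin n => ε i = 1)).image
          (fun i : Fin n => (i:ℕ)+1)).sum id
          = ∑ i ∈ Finset.univ.filter (fun i : Fin n => ε i = 1), ((i:ℕ)+1) := by
        rw [Finset.sum_image (fun x _ y _ hxy => hinj x y hxy)]
        rfl
      rw [hsum]
      have := hform ε
      rw [hP] at this
      omega
  · intro t ht
    obtain ⟨h1, h2⟩ := mem_lset.mp ht
    apply Finset.mem_filter.mpr
    refine ⟨Finset.mem_univ _, ?_⟩
    rw [hform, hfcongr]
    have hsum : ∑ i ∈ Finset.univ.filter (fun i : Fin n => (i:ℕ)+1 ∈ t), ((i:ℕ)+1)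
        = t.sum id := by
      conv_rhs => rw [← himg t h1]
      rw [Finset.sum_image (fun x _ y _ hxy => hinj x y hxy)]
      rfl
    rw [hsum, h2]
    omega
  · intro ε hε
    funext i
    by_cases hεi : ε i = 1
    · rw [if_pos, hεi]
      exact Finset.mem_image.mpr ⟨i, Finset.mem_filter.mpr ⟨Finset.mem_univ _, hεi⟩, rfl⟩
    · rw [if_neg]
      · rcases Int.units_eq_one_or (ε i) with h'|h'
        · exact absurd h' hεi
        · exact h'.symm
      · intro hmem
        obtain ⟨i', hi', heq⟩ := Finset.mem_image.mp hmem
        rw [hinj i' i heq] at hi'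
        exact hεi (Finset.mem_filter.mp hi').2
  · intro t ht
    rw [hfcongr]
    exact himg t (mem_lset.mp ht).1

end SubsetSl2

/-- For `n ≥ 1` with `n ≡ 0` or `3 (mod 4)`, `M n = S n`. -/
theorem stmt14 (n : ℕ) (hn : 1 ≤ n) (hmod : n % 4 = 0 ∨ n % 4 = 3) :
    M n = S n := by
  classical
  have hg := SubsetSl2.gauss n
  obtain ⟨c, hc⟩ : ∃ c, n*(n+1) = 4*c := by
    rcases hmod with hm | hm
    · obtain ⟨a, ha⟩ : ∃ a, n = 4*a := ⟨n/4, by omega⟩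
      exact ⟨a*(4*a+1), by rw [ha]; ring⟩
    · obtain ⟨a, ha⟩ : ∃ a, n = 4*a+3 := ⟨n/4, by omega⟩
      exact ⟨(4*a+3)*(a+1), by rw [ha]; ring⟩
  rw [hc] at hg
  obtain ⟨h, hh⟩ : ∃ h, 2*h = (Finset.Icc 1 n).sum id := ⟨c, by omega⟩
  have h4h : 4*h = n*(n+1) := by
    have : 2*(2*h) = n*(n+1) := by rw [hh, SubsetSl2.gauss n]
    linarith
  have hmono : ∀ d K, K + d = h → levelCard n K ≤ levelCard n h := by
    intro d
    induction d with
    | zero =>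
      intro K hK
      have : K = h := by omega
      rw [this]
    | succ d ih =>
      intro K hK
      have h1 : 4*K < n*(n+1) :=
        lt_of_lt_of_eq (by omega : 4*K < 4*h) h4h
      exact le_trans (SubsetSl2.step n hn K h1) (ih (K+1) (by omega))
  have hmax : ∀ K, levelCard n K ≤ levelCard n h := by
    intro K
    by_cases hK1 : K ≤ h
    · exact hmono (h - K) K (by omega)
    · by_cases hK2 : K ≤ (Finset.Icc 1 n).sum id
      · rw [SubsetSl2.symm_lc n K ((Finset.Icc 1 n).sum id - K) (by omega)]
        exact hmono (h - ((Finset.Icc 1 n).sum id - K)) _ (by omega)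
      · rw [SubsetSl2.lc_zero n K (by omega)]
        exact Nat.zero_le _
  have hM : M n = levelCard n h := by
    apply le_antisymm
    · exact ciSup_le hmax
    · exact le_ciSup (f := fun K => levelCard n K)
        ⟨levelCard n h, by rintro x ⟨K, rfl⟩; exact hmax K⟩ h
  rw [hM, SubsetSl2.S_eq n h hh]
end

section
/- M(n) satisfies the asymptotic formula M(n) = √(6/π) · 2^n / n^{3/2} · (1 + o(1)) as n → ∞; equivalently, the sequence M(n) · n^{3/2} / 2^n converges to √(6/π). -/
open Real Filter MeasureTheory Finset

noncomputable def Qf (n : ℕ) (θ : ℝ) : ℝ := ∏ k ∈ Finset.Icc 1 n, Real.cos (k * θ / 2)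

lemma Qf_continuous (n : ℕ) : Continuous (Qf n) := by
  unfold Qf
  exact continuous_finset_prod _ (fun k _ => (Real.continuous_cos.comp (by continuity)))

lemma abs_cos_le_exp (x : ℝ) : |Real.cos x| ≤ Real.exp (-(Real.sin x)^2/2) := by
  have h1 : Real.cos x ^ 2 ≤ Real.exp (-(Real.sin x)^2) := by
    have h := Real.add_one_le_exp (-(Real.sin x)^2)
    nlinarith [Real.sin_sq_add_cos_sq x]
  have h2 : Real.exp (-(Real.sin x)^2) = (Real.exp (-(Real.sin x)^2/2))^2 := by
    conv_rhs => rw [pow_two, ← Real.exp_add]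
    ring_nf
  calc |Real.cos x| = Real.sqrt (Real.cos x ^ 2) := (Real.sqrt_sq_eq_abs _).symm
    _ ≤ Real.sqrt ((Real.exp (-(Real.sin x)^2/2))^2) := Real.sqrt_le_sqrt (by rw [← h2]; exact h1)
    _ = Real.exp (-(Real.sin x)^2/2) := Real.sqrt_sq (Real.exp_pos _).le

lemma cos_le_exp_bound {x : ℝ} (hx : |x| ≤ 1/2) :
    Real.cos x ≤ Real.exp (-(x^2/2) + x^4) := by
  have hb := Real.cos_bound (le_trans hx (by norm_num))
  have h2 := Real.add_one_le_exp (-(x^2/2) + x^4)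
  have h3 : |x|^4 = x^4 := by rw [← abs_pow]; exact abs_of_nonneg (by positivity)
  rw [abs_le] at hb
  nlinarith [pow_two_nonneg x, pow_two_nonneg (x^2)]

lemma exp_le_cos_bound {x : ℝ} (hx : |x| ≤ 1/2) :
    Real.exp (-(x^2/2) - x^4) ≤ Real.cos x := by
  have h2 : Real.exp (-(x^2/2) - x^4) ≤ 1/(1 + (x^2/2 + x^4)) := by
    rw [show -(x^2/2) - x^4 = -(x^2/2 + x^4) by ring, Real.exp_neg, inv_eq_one_div]
    have := Real.add_one_le_exp (x^2/2 + x^4)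
    apply one_div_le_one_div_of_le (by positivity)
    linarith
  have hb := Real.cos_bound (le_trans hx (by norm_num))
  have h3 : |x|^4 = x^4 := by rw [← abs_pow]; exact abs_of_nonneg (by positivity)
  rw [abs_le] at hb
  have hx2 : x^2 ≤ 1/4 := by
    have : |x|^2 ≤ (1/2)^2 := pow_le_pow_left₀ (abs_nonneg x) hx 2
    rw [sq_abs] at this; nlinarith
  have hx4 : x^4 ≤ 1/16 := by nlinarith
  have hcos : 1 - x^2/2 - x^4*(5/96) ≤ Real.cos x := by linarith [hb.1]
  have h4 : 1/(1 + (x^2/2 + x^4)) ≤ Real.cos x := by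
    rw [div_le_iff₀ (by positivity)]
    have k1 : x^4 * x^2 ≤ x^4 * (1/4) := mul_le_mul_of_nonneg_left hx2 (by positivity)
    have k2 : x^4 * x^4 ≤ x^4 * (1/16) := mul_le_mul_of_nonneg_left hx4 (by positivity)
    have k0 : (0:ℝ) ≤ 1 + (x^2/2 + x^4) := by positivity
    nlinarith [mul_le_mul_of_nonneg_right hcos k0, pow_two_nonneg x, pow_two_nonneg (x^2)]
  linarith

lemma sum_sq_Icc (n : ℕ) : ∑ k ∈ Finset.Icc 1 n, (k:ℝ)^2 = n*(n+1)*(2*n+1)/6 := by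
  induction n with
  | zero => simp
  | succ n ih =>
    rw [Finset.sum_Icc_succ_top (by omega : 1 ≤ n + 1), ih]
    push_cast; ring

lemma dirichlet_sum (n : ℕ) (t : ℝ) :
    Real.sin t * ∑ k ∈ Finset.Icc 1 n, Real.cos (2*k*t)
      = (Real.sin ((2*n+1)*t) - Real.sin t)/2 := by
  induction n with
  | zero => simp
  | succ n ih =>
    rw [Finset.sum_Icc_succ_top (by omega : 1 ≤ n + 1), mul_add, ih]
    have e1 : ((2*(n+1)+1 : ℕ) : ℝ) * t = (2*(n+1) : ℝ)*t + t := by push_cast; ring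
    have e2 : ((2*n+1 : ℕ) : ℝ) * t = (2*(n+1) : ℝ)*t - t := by push_cast; ring
    push_cast
    rw [show (2*(n:ℝ)+1)*t = (2*((n:ℝ)+1))*t - t by ring,
        show (2*((n:ℝ)+1)+1)*t = (2*((n:ℝ)+1))*t + t by ring,
        Real.sin_add, Real.sin_sub]
    ring

lemma abs_Qf_le (n : ℕ) (θ : ℝ) :
    |Qf n θ| ≤ Real.exp (-(∑ k ∈ Finset.Icc 1 n, Real.sin ((k:ℝ)*θ/2)^2)/2) := by
  rw [Qf, Finset.abs_prod]
  calc ∏ k ∈ Finset.Icc 1 n, |Real.cos ((k:ℝ)*θ/2)|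
      ≤ ∏ k ∈ Finset.Icc 1 n, Real.exp (-(Real.sin ((k:ℝ)*θ/2))^2/2) :=
        Finset.prod_le_prod (fun k _ => abs_nonneg _) (fun k _ => abs_cos_le_exp _)
    _ = Real.exp (∑ k ∈ Finset.Icc 1 n, -(Real.sin ((k:ℝ)*θ/2))^2/2) :=
        (Real.exp_sum _ _).symm
    _ = Real.exp (-(∑ k ∈ Finset.Icc 1 n, Real.sin ((k:ℝ)*θ/2)^2)/2) := by
        congr 1
        rw [← Finset.sum_div, ← Finset.sum_neg_distrib]

lemma Qf_mid_bound {n : ℕ} {θ : ℝ} (hn : 1 ≤ n) (h1 : 2*π/n ≤ θ) (h2 : θ ≤ π) :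
    |Qf n θ| ≤ Real.exp (-(n:ℝ)/8) := by
  have hπ := Real.pi_pos
  have hnp : (0:ℝ) < n := by exact_mod_cast hn
  set t := θ/2 with ht
  have ht1 : π/n ≤ t := by
    rw [ht]
    have : 2*(π/(n:ℝ)) = 2*π/n := by ring
    linarith
  have ht2 : t ≤ π/2 := by rw [ht]; linarith
  have ht0 : 0 < t := lt_of_lt_of_le (by positivity) ht1
  have hsin : 2/(n:ℝ) ≤ Real.sin t := by
    have hms := Real.mul_le_sin ht0.le ht2
    have h5 : 2/π * (π/n) ≤ 2/π * t := mul_le_mul_of_nonneg_left ht1 (by positivity)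
    have h6 : 2/π * (π/(n:ℝ)) = 2/(n:ℝ) := by field_simp
    linarith
  have hsin0 : 0 < Real.sin t := lt_of_lt_of_le (by positivity) hsin
  have hD := dirichlet_sum n t
  set D := ∑ k ∈ Finset.Icc 1 n, Real.cos (2*k*t) with hDdef
  have hDb : |D| ≤ (n:ℝ)/2 := by
    have h5 : |Real.sin t * D| ≤ 1 := by
      rw [hD, abs_div, abs_two]
      have a1 := Real.sin_le_one ((2*(n:ℝ)+1)*t)
      have a2 := Real.neg_one_le_sin ((2*(n:ℝ)+1)*t)
      have a3 := Real.sin_le_one t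
      have a4 := Real.neg_one_le_sin t
      have : |Real.sin ((2*(n:ℝ)+1)*t) - Real.sin t| ≤ 2 := by
        rw [abs_le]; constructor <;> nlinarith
      linarith
    have h6 : Real.sin t * |D| ≤ 1 := by
      rwa [← abs_of_pos hsin0, ← abs_mul]
    have h7 : 2 ≤ Real.sin t * (n:ℝ) := by
      rw [div_le_iff₀ hnp] at hsin; linarith
    nlinarith [abs_nonneg D]
  have hsum : (n:ℝ)/4 ≤ ∑ k ∈ Finset.Icc 1 n, Real.sin ((k:ℝ)*θ/2)^2 := by
    have hid : ∀ k ∈ Finset.Icc 1 n, Real.sin ((k:ℝ)*θ/2)^2 = 1/2 - Real.cos (2*(k:ℝ)*t)/2 := by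
      intro k _
      rw [show (k:ℝ)*θ/2 = (k:ℝ)*t by rw [ht]; ring, Real.sin_sq_eq_half_sub,
        show 2*((k:ℝ)*t) = 2*(k:ℝ)*t by ring]
    rw [Finset.sum_congr rfl hid, Finset.sum_sub_distrib, Finset.sum_const, Nat.card_Icc,
      ← Finset.sum_div]
    have : ∑ k ∈ Finset.Icc 1 n, Real.cos (2*(k:ℝ)*t) = D := by
      rw [hDdef]
    rw [this]
    have hd1 : D ≤ (n:ℝ)/2 := le_of_abs_le hDb
    have hcard : ((n + 1 - 1 : ℕ) : ℝ) = (n:ℝ) := by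
      have : n + 1 - 1 = n := by omega
      rw [this]
    rw [nsmul_eq_mul, hcard]
    linarith
  calc |Qf n θ| ≤ Real.exp (-(∑ k ∈ Finset.Icc 1 n, Real.sin ((k:ℝ)*θ/2)^2)/2) := abs_Qf_le n θ
    _ ≤ Real.exp (-(n:ℝ)/8) := Real.exp_le_exp.mpr (by linarith)

lemma Qf_even (n : ℕ) (θ : ℝ) : Qf n (-θ) = Qf n θ := by
  unfold Qf
  refine Finset.prod_congr rfl (fun k _ => ?_)
  rw [show (k:ℝ)*(-θ)/2 = -((k:ℝ)*θ/2) by ring, Real.cos_neg]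

lemma Qf_near_bound_nonneg {n : ℕ} {θ : ℝ} (hn : 3 ≤ n) (hθ0 : 0 ≤ θ) (h : θ ≤ 2*π/n) :
    |Qf n θ| ≤ Real.exp (-(n:ℝ)^3*θ^2/(162*π^2)) := by
  have hπ := Real.pi_pos
  have hnp : (0:ℝ) < n := by positivity
  set K := n / 2 with hK
  have hKn : K ≤ n := by omega
  have hK3 : (n:ℝ)/3 ≤ (K:ℝ) := by
    have h1 : n ≤ 3 * K := by omega
    have h2 : (n:ℝ) ≤ 3 * (K:ℝ) := by exact_mod_cast h1
    linarith
  have hK2 : 2*(K:ℝ) ≤ n := by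
    have h1 : 2 * K ≤ n := by omega
    exact_mod_cast h1
  have harg : ∀ k ∈ Finset.Icc 1 K, 0 ≤ (k:ℝ)*θ/2 ∧ (k:ℝ)*θ/2 ≤ π/2 := by
    intro k hk
    rw [Finset.mem_Icc] at hk
    have hkK : (k:ℝ) ≤ K := by exact_mod_cast hk.2
    refine ⟨by positivity, ?_⟩
    have h1 : (k:ℝ)*θ ≤ (K:ℝ)*θ := mul_le_mul_of_nonneg_right hkK hθ0
    have h2 : (K:ℝ)*θ ≤ (K:ℝ)*(2*π/n) := mul_le_mul_of_nonneg_left h (by positivity)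
    have h4 : 2*(K:ℝ)/n ≤ 1 := (div_le_one hnp).mpr hK2
    have h3 : (K:ℝ)*(2*π/n) ≤ π := by
      rw [show (K:ℝ)*(2*π/n) = (2*(K:ℝ)/n)*π by ring]
      nlinarith
    linarith
  have hsplit : |Qf n θ| ≤ ∏ k ∈ Finset.Icc 1 K, |Real.cos ((k:ℝ)*θ/2)| := by
    rw [Qf, Finset.abs_prod]
    have hsub : Finset.Icc 1 K ⊆ Finset.Icc 1 n := Finset.Icc_subset_Icc_right hKn
    rw [← Finset.prod_sdiff hsub]
    have hb1 : ∏ k ∈ Finset.Icc 1 n \ Finset.Icc 1 K, |Real.cos ((k:ℝ)*θ/2)| ≤ 1 :=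
      Finset.prod_le_one (fun _ _ => abs_nonneg _) (fun _ _ => Real.abs_cos_le_one _)
    have hb2 : (0:ℝ) ≤ ∏ k ∈ Finset.Icc 1 K, |Real.cos ((k:ℝ)*θ/2)| :=
      Finset.prod_nonneg (fun _ _ => abs_nonneg _)
    calc (∏ k ∈ Finset.Icc 1 n \ Finset.Icc 1 K, |Real.cos ((k:ℝ)*θ/2)|) *
          ∏ k ∈ Finset.Icc 1 K, |Real.cos ((k:ℝ)*θ/2)|
        ≤ 1 * ∏ k ∈ Finset.Icc 1 K, |Real.cos ((k:ℝ)*θ/2)| :=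
          mul_le_mul_of_nonneg_right hb1 hb2
      _ = ∏ k ∈ Finset.Icc 1 K, |Real.cos ((k:ℝ)*θ/2)| := one_mul _
  have hfac : ∀ k ∈ Finset.Icc 1 K,
      |Real.cos ((k:ℝ)*θ/2)| ≤ Real.exp (-(θ^2/(2*π^2)) * (k:ℝ)^2) := by
    intro k hk
    obtain ⟨hk0, hk2⟩ := harg k hk
    have hs := Real.mul_le_sin hk0 hk2
    have hsq : (2/π*((k:ℝ)*θ/2))^2 ≤ Real.sin ((k:ℝ)*θ/2)^2 :=
      pow_le_pow_left₀ (by positivity) hs 2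
    have he : (2/π*((k:ℝ)*θ/2))^2 = (k:ℝ)^2*θ^2/π^2 := by
      field_simp
    calc |Real.cos ((k:ℝ)*θ/2)| ≤ Real.exp (-(Real.sin ((k:ℝ)*θ/2))^2/2) := abs_cos_le_exp _
      _ ≤ Real.exp (-(θ^2/(2*π^2)) * (k:ℝ)^2) := by
          apply Real.exp_le_exp.mpr
          rw [he] at hsq
          have : (k:ℝ)^2*θ^2/π^2 / 2 = θ^2/(2*π^2) * (k:ℝ)^2 := by ring
          linarith [hsq, this]
  have hsum : ∑ k ∈ Finset.Icc 1 K, (k:ℝ)^2 ≥ (K:ℝ)^3/3 := by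
    rw [sum_sq_Icc]
    have : (0:ℝ) ≤ K := by positivity
    nlinarith
  have hcube : ((n:ℝ)/3)^3 ≤ (K:ℝ)^3 := pow_le_pow_left₀ (by positivity) hK3 3
  calc |Qf n θ| ≤ ∏ k ∈ Finset.Icc 1 K, |Real.cos ((k:ℝ)*θ/2)| := hsplit
    _ ≤ ∏ k ∈ Finset.Icc 1 K, Real.exp (-(θ^2/(2*π^2)) * (k:ℝ)^2) :=
        Finset.prod_le_prod (fun _ _ => abs_nonneg _) hfac
    _ = Real.exp (∑ k ∈ Finset.Icc 1 K, -(θ^2/(2*π^2)) * (k:ℝ)^2) := (Real.exp_sum _ _).symm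
    _ = Real.exp (-(θ^2/(2*π^2)) * ∑ k ∈ Finset.Icc 1 K, (k:ℝ)^2) := by
        rw [Finset.mul_sum]
    _ ≤ Real.exp (-(n:ℝ)^3*θ^2/(162*π^2)) := by
        apply Real.exp_le_exp.mpr
        have hc : (0:ℝ) ≤ θ^2/(2*π^2) := by positivity
        have h1 : (n:ℝ)^3/27/3 ≤ ∑ k ∈ Finset.Icc 1 K, (k:ℝ)^2 := by
          have he : ((n:ℝ)/3)^3 = (n:ℝ)^3/27 := by ring
          rw [he] at hcube
          linarith
        rw [neg_mul, show -(n:ℝ)^3*θ^2/(162*π^2) = -((n:ℝ)^3*θ^2/(162*π^2)) by ring]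
        apply neg_le_neg
        calc (n:ℝ)^3*θ^2/(162*π^2) = θ^2/(2*π^2) * ((n:ℝ)^3/27/3) := by ring
          _ ≤ θ^2/(2*π^2) * ∑ k ∈ Finset.Icc 1 K, (k:ℝ)^2 :=
              mul_le_mul_of_nonneg_left h1 hc

lemma Qf_near_bound {n : ℕ} {θ : ℝ} (hn : 3 ≤ n) (h : |θ| ≤ 2*π/n) :
    |Qf n θ| ≤ Real.exp (-(n:ℝ)^3*θ^2/(162*π^2)) := by
  rcases le_or_gt 0 θ with hθ0 | hθ0
  · exact Qf_near_bound_nonneg hn hθ0 (by rwa [abs_of_nonneg hθ0] at h)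
  · have h1 : |Qf n (-θ)| ≤ Real.exp (-(n:ℝ)^3*(-θ)^2/(162*π^2)) := by
      apply Qf_near_bound_nonneg hn (by linarith)
      rwa [abs_of_neg hθ0] at h
    rwa [Qf_even, neg_pow, show ((-1:ℝ))^2*θ^2 = θ^2 by ring] at h1

lemma sum_Icc_id (n : ℕ) : ∑ k ∈ Finset.Icc 1 n, (k:ℝ) = n*(n+1)/2 := by
  induction n with
  | zero => simp
  | succ n ih =>
    rw [Finset.sum_Icc_succ_top (by omega : 1 ≤ n + 1), ih]
    push_cast; ring

-- orthogonality
lemma orth (j : ℤ) :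
    (∫ θ in (-π)..π, Complex.exp ((j * Complex.I) * θ))
      = if j = 0 then (2*π:ℂ) else 0 := by
  rcases eq_or_ne j 0 with hj | hj
  · subst hj
    simp only [Int.cast_zero, zero_mul, Complex.exp_zero, if_pos rfl]
    rw [intervalIntegral.integral_const]
    push_cast
    rw [sub_neg_eq_add]
    simp [Complex.real_smul]
    ring
  · rw [if_neg hj]
    have hc : ((j:ℂ) * Complex.I) ≠ 0 :=
      mul_ne_zero (Int.cast_ne_zero.mpr hj) Complex.I_ne_zero
    rw [integral_exp_mul_complex hc]
    have e1 : ((j:ℂ) * Complex.I) * (π:ℂ) = ((j:ℝ)*π : ℝ) * Complex.I := by push_cast; ring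
    have e2 : ((j:ℂ) * Complex.I) * ((-π:ℝ):ℂ) = (-((j:ℝ)*π) : ℝ) * Complex.I := by
      push_cast; ring
    rw [e1, e2, Complex.exp_mul_I, Complex.exp_mul_I]
    have hsin : Complex.sin (((j:ℝ)*π : ℝ):ℂ) = 0 := by
      rw [← Complex.ofReal_sin, Real.sin_int_mul_pi]
      simp
    have hsin' : Complex.sin ((-((j:ℝ)*π) : ℝ):ℂ) = 0 := by
      rw [← Complex.ofReal_sin, Real.sin_neg, Real.sin_int_mul_pi]
      simp
    have hcos : Complex.cos ((-((j:ℝ)*π) : ℝ):ℂ) = Complex.cos (((j:ℝ)*π : ℝ):ℂ) := by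
      push_cast
      rw [Complex.cos_neg]
    rw [hsin, hsin', hcos]
    simp

-- expansion of the product
lemma prod_expand (n m : ℕ) (θ : ℝ) :
    (∏ k ∈ Finset.Icc 1 n, (Complex.exp ((k:ℂ) * (Complex.I * θ)) + 1))
      * Complex.exp (-(m:ℂ) * (Complex.I * θ))
      = ∑ t ∈ (Finset.Icc 1 n).powerset,
          Complex.exp (((((t.sum id : ℕ):ℤ) - (m:ℤ)) * Complex.I) * θ) := by
  rw [Finset.prod_add, Finset.sum_mul]
  refine Finset.sum_congr rfl (fun t ht => ?_)
  rw [Finset.prod_const_one, mul_one, ← Complex.exp_sum, ← Complex.exp_add]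
  congr 1
  rw [← Finset.sum_mul]
  have h1 : (∑ i ∈ t, ((i:ℕ):ℂ)) = ((t.sum id : ℕ):ℂ) := by
    rw [Nat.cast_sum]
    rfl
  rw [h1]
  push_cast
  ring

lemma levelCard_complex (n m : ℕ) :
    (((levelCard n m : ℝ) * (2*π) : ℝ) : ℂ)
      = ∫ θ in (-π)..π,
          (∏ k ∈ Finset.Icc 1 n, (Complex.exp ((k:ℂ) * (Complex.I * θ)) + 1))
            * Complex.exp (-(m:ℂ) * (Complex.I * θ)) := by
  have hint : ∀ t : Finset ℕ, IntervalIntegrable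
      (fun θ:ℝ => Complex.exp (((((t.sum id:ℕ):ℤ) - (m:ℤ)) * Complex.I) * θ)) volume (-π) π := by
    intro t
    apply Continuous.intervalIntegrable
    exact Complex.continuous_exp.comp (continuous_const.mul Complex.continuous_ofReal)
  rw [intervalIntegral.integral_congr (g := fun θ => ∑ t ∈ (Finset.Icc 1 n).powerset,
      Complex.exp (((((t.sum id:ℕ):ℤ) - (m:ℤ)) * Complex.I) * θ))
      (fun θ _ => prod_expand n m θ)]
  rw [intervalIntegral.integral_finset_sum (fun t _ => hint t)]
  have horth : ∀ t ∈ (Finset.Icc 1 n).powerset,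
      (∫ θ in (-π)..π, Complex.exp (((((t.sum id:ℕ):ℤ) - (m:ℤ)) * Complex.I) * θ))
        = if t.sum id = m then (2*π:ℂ) else 0 := by
    intro t _
    have hco : ((((t.sum id : ℕ) : ℤ) : ℂ) - ((m : ℤ) : ℂ))
        = ((((t.sum id : ℕ) : ℤ) - (m : ℤ) : ℤ) : ℂ) := (Int.cast_sub _ _).symm
    simp only [hco, orth]
    have hc2 : (∑ x ∈ t, (x:ℤ)) = ((∑ x ∈ t, x : ℕ) : ℤ) := by push_cast; rfl
    have hiff2 : ((∑ x ∈ t, (x:ℤ)) - (m:ℤ) = 0) ↔ ((∑ x ∈ t, x) = m) := by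
      rw [hc2]; omega
    simp [hiff2]
  rw [Finset.sum_congr rfl horth, Finset.sum_ite, Finset.sum_const, Finset.sum_const_zero,
    add_zero, nsmul_eq_mul]
  rw [levelCard]
  push_cast
  ring

lemma prod_factor (n : ℕ) (θ : ℝ) :
    (∏ k ∈ Finset.Icc 1 n, (Complex.exp ((k:ℂ) * (Complex.I * θ)) + 1))
      = 2^n * Complex.exp ((((n:ℂ)*(n+1)/4) * θ) * Complex.I) * ((Qf n θ : ℝ):ℂ) := by
  have hfac : ∀ k ∈ Finset.Icc 1 n, Complex.exp ((k:ℂ) * (Complex.I * θ)) + 1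
      = 2 * Complex.exp (((k:ℂ)/2) * (Complex.I * θ)) * ((Real.cos ((k:ℝ)*θ/2) : ℝ):ℂ) := by
    intro k _
    rw [Complex.ofReal_cos, Complex.cos]
    set w := ((k:ℂ)/2) * (Complex.I * (θ:ℂ)) with hw
    have e1 : ((((k:ℝ)*θ/2 : ℝ)):ℂ) * Complex.I = w := by rw [hw]; push_cast; ring
    have e2 : -((((k:ℝ)*θ/2 : ℝ)):ℂ) * Complex.I = -w := by rw [hw]; push_cast; ring
    rw [e1, e2]
    have e3 : (k:ℂ) * (Complex.I * (θ:ℂ)) = w + w := by rw [hw]; ring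
    rw [e3, Complex.exp_add]
    have e4 : Complex.exp w * Complex.exp (-w) = 1 := by
      rw [← Complex.exp_add]; simp
    have e5 : 2 * Complex.exp w * ((Complex.exp w + Complex.exp (-w))/2)
        = Complex.exp w * Complex.exp w + Complex.exp w * Complex.exp (-w) := by ring
    rw [e5, e4]
  rw [Finset.prod_congr rfl hfac, Finset.prod_mul_distrib, Finset.prod_mul_distrib,
    Finset.prod_const, Nat.card_Icc, ← Complex.exp_sum, ← Complex.ofReal_prod]
  have hsum : ∑ k ∈ Finset.Icc 1 n, ((k:ℂ)/2) * (Complex.I*(θ:ℂ))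
      = (((n:ℂ)*(n+1)/4) * θ) * Complex.I := by
    rw [← Finset.sum_mul, ← Finset.sum_div]
    have h2 := congrArg (Complex.ofReal) (sum_Icc_id n)
    push_cast at h2
    rw [h2]
    ring
  rw [hsum]
  congr 2

lemma levelCard_eq (n m : ℕ) :
    (levelCard n m : ℝ) * (2*π)
      = 2^n * ∫ θ in (-π)..π, Qf n θ * Real.cos (((n*(n+1):ℝ)/4 - m) * θ) := by
  have hcontc : Continuous (fun θ:ℝ => ((Qf n θ : ℝ):ℂ)
      * Complex.exp (((((n*(n+1):ℝ)/4 - m) * θ : ℝ):ℂ) * Complex.I)) := by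
    apply Continuous.mul
    · exact Complex.continuous_ofReal.comp (Qf_continuous n)
    · exact Complex.continuous_exp.comp
        ((Complex.continuous_ofReal.comp (continuous_const.mul continuous_id)).mul
          continuous_const)
  have key : (((levelCard n m : ℝ) * (2*π) : ℝ) : ℂ)
      = 2^n * ∫ θ in (-π)..π, ((Qf n θ : ℝ):ℂ)
          * Complex.exp (((((n*(n+1):ℝ)/4 - m) * θ : ℝ):ℂ) * Complex.I) := by
    rw [levelCard_complex n m, ← intervalIntegral.integral_const_mul]
    apply intervalIntegral.integral_congr
    intro θ _
    simp only
    rw [prod_factor n θ]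
    have hAB : ((((n:ℂ)*(n+1)/4) * θ) * Complex.I) + (-(m:ℂ) * (Complex.I * θ))
        = (((((n*(n+1):ℝ)/4 - m) * θ : ℝ)):ℂ) * Complex.I := by push_cast; ring
    calc (2^n : ℂ) * Complex.exp ((((n:ℂ)*(n+1)/4) * θ) * Complex.I) * ((Qf n θ : ℝ):ℂ)
          * Complex.exp (-(m:ℂ) * (Complex.I * θ))
        = 2^n * (((Qf n θ : ℝ):ℂ) * Complex.exp (((((n:ℂ)*(n+1)/4) * θ) * Complex.I)
            + (-(m:ℂ) * (Complex.I * θ)))) := by rw [Complex.exp_add]; ring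
      _ = 2^n * (((Qf n θ : ℝ):ℂ)
            * Complex.exp ((((((n*(n+1):ℝ)/4 - m) * θ : ℝ)):ℂ) * Complex.I)) := by rw [hAB]
  have hre := congrArg Complex.re key
  rw [Complex.ofReal_re] at hre
  rw [hre]
  have h2n : ((2:ℂ)^n) = (((2:ℝ)^n : ℝ) : ℂ) := by push_cast; ring
  rw [h2n, Complex.re_ofReal_mul]
  congr 1
  have hint := hcontc.intervalIntegrable (μ := volume) (-π) π
  have hcc := (Complex.reCLM.intervalIntegral_comp_comm hint).symm
  simp only [Complex.reCLM_apply] at hcc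
  rw [hcc]
  apply intervalIntegral.integral_congr
  intro θ _
  simp only
  rw [Complex.re_ofReal_mul, Complex.exp_ofReal_mul_I_re]

lemma levelCard_le_pow (n K : ℕ) : levelCard n K ≤ 2^n := by
  have h1 : levelCard n K ≤ ((Finset.Icc 1 n).powerset).card := Finset.card_filter_le _ _
  rwa [Finset.card_powerset, Nat.card_Icc, Nat.add_sub_cancel] at h1

lemma M_bddAbove (n : ℕ) : BddAbove (Set.range (levelCard n)) := by
  refine ⟨2^n, ?_⟩
  rintro x ⟨K, rfl⟩
  exact levelCard_le_pow n K

lemma M_exists (n : ℕ) : ∃ K, M n = levelCard n K := by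
  have h := Nat.sSup_mem (s := Set.range (levelCard n)) ⟨levelCard n 0, ⟨0, rfl⟩⟩ (M_bddAbove n)
  obtain ⟨K, hK⟩ := h
  exact ⟨K, hK.symm⟩

lemma levelCard_le_M (n K : ℕ) : levelCard n K ≤ M n := le_ciSup (M_bddAbove n) K

lemma rpow32 {n : ℕ} (hn : 1 ≤ n) : (n:ℝ)^((3:ℝ)/2) = n * Real.sqrt n := by
  have h0 : (0:ℝ) < n := by exact_mod_cast hn
  rw [Real.sqrt_eq_rpow, show ((3:ℝ)/2) = 1 + 1/2 by norm_num, Real.rpow_add h0, Real.rpow_one]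

lemma rpow32_sq {n : ℕ} (hn : 1 ≤ n) : ((n:ℝ)^((3:ℝ)/2))^2 = (n:ℝ)^3 := by
  have h0 : (0:ℝ) ≤ n := by positivity
  rw [← Real.rpow_natCast ((n:ℝ)^((3:ℝ)/2)) 2, ← Real.rpow_mul h0,
    show ((3:ℝ)/2*((2:ℕ):ℝ)) = ((3:ℕ):ℝ) by norm_num, Real.rpow_natCast]

lemma Qf_scaled_tendsto (s : ℝ) :
    Tendsto (fun n : ℕ => Qf n (s / (n:ℝ)^((3:ℝ)/2))) atTop (nhds (Real.exp (-s^2/24))) := by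
  -- the quadratic exponent sequence
  have h1n : Tendsto (fun n : ℕ => (1:ℝ)/n) atTop (nhds 0) := tendsto_one_div_atTop_nhds_zero_nat
  have hg : Tendsto (fun n : ℕ => s^2/(8*(n:ℝ)^3)*((n:ℝ)*((n:ℝ)+1)*(2*(n:ℝ)+1)/6))
      atTop (nhds (s^2/24)) := by
    have h2 : Tendsto (fun n : ℕ => s^2/48*((1+1/(n:ℝ))*(2+1/(n:ℝ)))) atTop
        (nhds (s^2/48*((1+0)*(2+0)))) :=
      (tendsto_const_nhds (x := s^2/48) (f := atTop)).mul
        ((tendsto_const_nhds.add h1n).mul (tendsto_const_nhds.add h1n))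
    rw [show s^2/48*((1+0)*(2+0)) = s^2/24 by ring] at h2
    apply h2.congr'
    filter_upwards [eventually_ge_atTop 1] with n hn
    have hne : ((n:ℝ)) ≠ 0 := by positivity
    field_simp
    ring
  have hh : Tendsto (fun n : ℕ => s^4/16*(1/(n:ℝ))) atTop (nhds 0) := by
    have := (tendsto_const_nhds (x := s^4/16) (f := atTop)).mul h1n
    simpa using this
  -- lower and upper sequences
  have hL : Tendsto (fun n : ℕ => Real.exp (-(s^2/(8*(n:ℝ)^3)*((n:ℝ)*((n:ℝ)+1)*(2*(n:ℝ)+1)/6))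
      - s^4/16*(1/(n:ℝ)))) atTop (nhds (Real.exp (-s^2/24))) := by
    have := (Real.continuous_exp.tendsto _).comp (hg.neg.sub hh)
    simpa [Function.comp_def, neg_div] using this
  have hU : Tendsto (fun n : ℕ => Real.exp (-(s^2/(8*(n:ℝ)^3)*((n:ℝ)*((n:ℝ)+1)*(2*(n:ℝ)+1)/6))
      + s^4/16*(1/(n:ℝ)))) atTop (nhds (Real.exp (-s^2/24))) := by
    have := (Real.continuous_exp.tendsto _).comp (hg.neg.add hh)
    simpa [Function.comp_def, neg_div] using this
  have hkey : ∀ᶠ (n:ℕ) in atTop,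
      Real.exp (-(s^2/(8*(n:ℝ)^3)*((n:ℝ)*((n:ℝ)+1)*(2*(n:ℝ)+1)/6)) - s^4/16*(1/(n:ℝ)))
        ≤ Qf n (s / (n:ℝ)^((3:ℝ)/2)) ∧
      Qf n (s / (n:ℝ)^((3:ℝ)/2))
        ≤ Real.exp (-(s^2/(8*(n:ℝ)^3)*((n:ℝ)*((n:ℝ)+1)*(2*(n:ℝ)+1)/6)) + s^4/16*(1/(n:ℝ))) := by
    filter_upwards [eventually_ge_atTop 1, eventually_ge_atTop (⌈s^2⌉₊)] with n hn1 hns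
    have h0 : (0:ℝ) < n := by exact_mod_cast hn1
    have hsq : s^2 ≤ (n:ℝ) := le_trans (Nat.le_ceil _) (by exact_mod_cast hns)
    have hsqrt : |s| ≤ Real.sqrt n := by
      rw [show |s| = Real.sqrt (s^2) by rw [Real.sqrt_sq_eq_abs]]
      exact Real.sqrt_le_sqrt hsq
    have hsp : (0:ℝ) < Real.sqrt n := Real.sqrt_pos.mpr h0
    set θ := s / (n:ℝ)^((3:ℝ)/2) with hθ
    have hθabs : |θ| = |s|/((n:ℝ)*Real.sqrt n) := by
      rw [hθ, abs_div, abs_of_nonneg (by positivity : (0:ℝ) ≤ (n:ℝ)^((3:ℝ)/2)), rpow32 hn1]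
    have hxk : ∀ k ∈ Finset.Icc 1 n, |(k:ℝ)*θ/2| ≤ |s|/(2*Real.sqrt n) := by
      intro k hk
      rw [Finset.mem_Icc] at hk
      have hkn : (k:ℝ) ≤ n := by exact_mod_cast hk.2
      have hk0 : (0:ℝ) ≤ k := by positivity
      have habs : |(k:ℝ)*θ/2| = (k:ℝ)*|θ|/2 := by
        rw [abs_div, abs_mul, abs_of_nonneg hk0, abs_of_nonneg (by norm_num : (0:ℝ) ≤ (2:ℝ))]
      rw [habs, hθabs]
      have h1 : (k:ℝ)*(|s|/((n:ℝ)*Real.sqrt n)) ≤ (n:ℝ)*(|s|/((n:ℝ)*Real.sqrt n)) :=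
        mul_le_mul_of_nonneg_right hkn (by positivity)
      have h2 : (n:ℝ)*(|s|/((n:ℝ)*Real.sqrt n))/2 = |s|/(2*Real.sqrt n) := by
        field_simp
      linarith
    have hx12 : ∀ k ∈ Finset.Icc 1 n, |(k:ℝ)*θ/2| ≤ 1/2 := by
      intro k hk
      refine le_trans (hxk k hk) ?_
      rw [div_le_div_iff₀ (by positivity) (by norm_num)]
      nlinarith
    have hS2 : ∑ k ∈ Finset.Icc 1 n, (((k:ℝ)*θ/2)^2/2)
        = s^2/(8*(n:ℝ)^3)*((n:ℝ)*((n:ℝ)+1)*(2*(n:ℝ)+1)/6) := by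
      have hc : ∀ k ∈ Finset.Icc 1 n, ((k:ℝ)*θ/2)^2/2 = θ^2/8 * (k:ℝ)^2 := fun k _ => by ring
      rw [Finset.sum_congr rfl hc, ← Finset.mul_sum, sum_sq_Icc]
      have hth2 : θ^2 = s^2/(n:ℝ)^3 := by rw [hθ, div_pow, rpow32_sq hn1]
      rw [hth2]; ring
    have hE4 : ∀ k ∈ Finset.Icc 1 n, ((k:ℝ)*θ/2)^4 ≤ s^4/(16*(n:ℝ)^2) := by
      intro k hk
      have h := hxk k hk
      have h4 : |(k:ℝ)*θ/2|^4 ≤ (|s|/(2*Real.sqrt n))^4 := pow_le_pow_left₀ (abs_nonneg _) h 4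
      have he1 : |(k:ℝ)*θ/2|^4 = ((k:ℝ)*θ/2)^4 := by
        rw [← abs_pow]; exact abs_of_nonneg (by positivity)
      have he2 : (|s|/(2*Real.sqrt n))^4 = s^4/(16*(n:ℝ)^2) := by
        rw [div_pow, show |s|^4 = s^4 by rw [← abs_pow]; exact abs_of_nonneg (by positivity),
          show ((2:ℝ)*Real.sqrt n)^4 = 16*((Real.sqrt n)^2)^2 by ring, Real.sq_sqrt h0.le]
      rw [he1, he2] at h4
      exact h4
    have hEsum : ∑ k ∈ Finset.Icc 1 n, ((k:ℝ)*θ/2)^4 ≤ s^4/16*(1/(n:ℝ)) := by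
      calc ∑ k ∈ Finset.Icc 1 n, ((k:ℝ)*θ/2)^4
          ≤ (Finset.Icc 1 n).card • (s^4/(16*(n:ℝ)^2)) := Finset.sum_le_card_nsmul _ _ _ hE4
        _ = (n:ℝ) * (s^4/(16*(n:ℝ)^2)) := by
            rw [Nat.card_Icc, Nat.add_sub_cancel, nsmul_eq_mul]
        _ = s^4/16*(1/(n:ℝ)) := by field_simp
    have hEnn : 0 ≤ ∑ k ∈ Finset.Icc 1 n, ((k:ℝ)*θ/2)^4 :=
      Finset.sum_nonneg fun k _ => by positivity
    have hlow : Real.exp (∑ k ∈ Finset.Icc 1 n, (-(((k:ℝ)*θ/2)^2/2) - ((k:ℝ)*θ/2)^4))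
        ≤ Qf n θ := by
      rw [Real.exp_sum, Qf]
      exact Finset.prod_le_prod (fun k _ => (Real.exp_pos _).le)
        (fun k hk => by simpa using exp_le_cos_bound (hx12 k hk))
    have hup : Qf n θ ≤ Real.exp (∑ k ∈ Finset.Icc 1 n, (-(((k:ℝ)*θ/2)^2/2) + ((k:ℝ)*θ/2)^4)) := by
      rw [Real.exp_sum, Qf]
      refine Finset.prod_le_prod (fun k hk => ?_) (fun k hk => by
        simpa using cos_le_exp_bound (hx12 k hk))
      have hpi := Real.pi_gt_three
      have h12 := abs_le.mp (hx12 k hk)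
      exact Real.cos_nonneg_of_mem_Icc ⟨by linarith [h12.1], by linarith [h12.2]⟩
    have hsplit1 : ∑ k ∈ Finset.Icc 1 n, (-(((k:ℝ)*θ/2)^2/2) - ((k:ℝ)*θ/2)^4)
        = -(∑ k ∈ Finset.Icc 1 n, (((k:ℝ)*θ/2)^2/2)) - ∑ k ∈ Finset.Icc 1 n, ((k:ℝ)*θ/2)^4 := by
      rw [Finset.sum_sub_distrib, Finset.sum_neg_distrib]
    have hsplit2 : ∑ k ∈ Finset.Icc 1 n, (-(((k:ℝ)*θ/2)^2/2) + ((k:ℝ)*θ/2)^4)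
        = -(∑ k ∈ Finset.Icc 1 n, (((k:ℝ)*θ/2)^2/2)) + ∑ k ∈ Finset.Icc 1 n, ((k:ℝ)*θ/2)^4 := by
      rw [Finset.sum_add_distrib, Finset.sum_neg_distrib]
    constructor
    · refine le_trans ?_ hlow
      apply Real.exp_le_exp.mpr
      rw [hsplit1, hS2]
      linarith
    · refine le_trans hup ?_
      apply Real.exp_le_exp.mpr
      rw [hsplit2, hS2]
      linarith
  exact tendsto_of_tendsto_of_tendsto_of_le_of_le' hL hU
    (hkey.mono fun n h => h.1) (hkey.mono fun n h => h.2)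

lemma main_tendsto (F : ℕ → ℝ → ℝ) (hcont : ∀ n, Continuous (F n))
    (hdom : ∀ n θ, |F n θ| ≤ |Qf n θ|)
    (hpt : ∀ s : ℝ, Tendsto (fun n : ℕ => F n (s / (n:ℝ)^((3:ℝ)/2))) atTop
      (nhds (Real.exp (-s^2/24)))) :
    Tendsto (fun n : ℕ => (n:ℝ)^((3:ℝ)/2) * ∫ θ in (-(2*π/(n:ℝ)))..(2*π/(n:ℝ)), F n θ)
      atTop (nhds (Real.sqrt (24*π))) := by
  have hπ := Real.pi_pos
  set G : ℕ → ℝ → ℝ := fun n s => (Set.Ioc (-(2*π*Real.sqrt n)) (2*π*Real.sqrt n)).indicator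
      (fun u => F n (u / (n:ℝ)^((3:ℝ)/2))) s with hG
  -- Step A: eventually the LHS equals ∫ G n
  have hstep : ∀ᶠ (n:ℕ) in atTop,
      ∫ s, G n s = (n:ℝ)^((3:ℝ)/2) * ∫ θ in (-(2*π/(n:ℝ)))..(2*π/(n:ℝ)), F n θ := by
    filter_upwards [eventually_ge_atTop 1] with n hn1
    have h0 : (0:ℝ) < n := by exact_mod_cast hn1
    have hc0 : (0:ℝ) < (n:ℝ)^((3:ℝ)/2) := by positivity
    have hsp : Real.sqrt n ≠ 0 := (Real.sqrt_pos.mpr h0).ne'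
    have h2 : (2*π*Real.sqrt n)/(n:ℝ)^((3:ℝ)/2) = 2*π/(n:ℝ) := by
      rw [rpow32 hn1]
      field_simp
    have h3 : (-(2*π*Real.sqrt n))/(n:ℝ)^((3:ℝ)/2) = -(2*π/(n:ℝ)) := by rw [neg_div, h2]
    have h1 : ∫ s in (-(2*π*Real.sqrt n))..(2*π*Real.sqrt n), F n (s / (n:ℝ)^((3:ℝ)/2))
        = (n:ℝ)^((3:ℝ)/2) • ∫ θ in (-(2*π/(n:ℝ)))..(2*π/(n:ℝ)), F n θ := by
      rw [intervalIntegral.integral_comp_div (f := F n) (ne_of_gt hc0), h2, h3]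
    have hb0 : -(2*π*Real.sqrt n) ≤ 2*π*Real.sqrt n := by
      have := Real.sqrt_nonneg (n:ℝ)
      nlinarith
    calc ∫ s, G n s
        = ∫ s in Set.Ioc (-(2*π*Real.sqrt n)) (2*π*Real.sqrt n),
            F n (s / (n:ℝ)^((3:ℝ)/2)) := by
          rw [hG]
          exact integral_indicator measurableSet_Ioc
      _ = ∫ s in (-(2*π*Real.sqrt n))..(2*π*Real.sqrt n), F n (s / (n:ℝ)^((3:ℝ)/2)) :=
          (intervalIntegral.integral_of_le hb0).symm
      _ = (n:ℝ)^((3:ℝ)/2) * ∫ θ in (-(2*π/(n:ℝ)))..(2*π/(n:ℝ)), F n θ := by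
          rw [h1, smul_eq_mul]
  -- Step B : dominated convergence
  have hgauss : (∫ s : ℝ, Real.exp (-(1/24) * s^2)) = Real.sqrt (24*π) := by
    rw [integral_gaussian]
    norm_num [mul_comm]
  have htend : Tendsto (fun n : ℕ => ∫ s, G n s) atTop (nhds (Real.sqrt (24*π))) := by
    rw [← hgauss]
    apply tendsto_integral_filter_of_dominated_convergence
      (bound := fun s : ℝ => Real.exp (-(1/(162*π^2)) * s^2))
    · filter_upwards with n
      exact (((hcont n).comp (continuous_id.div_const _)).aestronglyMeasurable).indicator
        measurableSet_Ioc
    · filter_upwards [eventually_ge_atTop 3] with n hn3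
      filter_upwards with s
      rw [hG]
      simp only
      by_cases hs : s ∈ Set.Ioc (-(2*π*Real.sqrt n)) (2*π*Real.sqrt n)
      case neg =>
        rw [Set.indicator_of_notMem hs]
        simp [Real.exp_nonneg]
      case pos =>
          rw [Set.indicator_of_mem hs]
          have hn1 : 1 ≤ n := by omega
          have h0 : (0:ℝ) < n := by exact_mod_cast hn1
          have hsb : |s| ≤ 2*π*Real.sqrt n := by
            rw [abs_le]
            exact ⟨(hs.1).le, hs.2⟩
          have hc0 : (0:ℝ) < (n:ℝ)^((3:ℝ)/2) := by positivity
          have hθb : |s / (n:ℝ)^((3:ℝ)/2)| ≤ 2*π/(n:ℝ) := by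
            rw [abs_div, abs_of_pos hc0, div_le_div_iff₀ hc0 h0, rpow32 hn1]
            calc |s| * (n:ℝ) ≤ (2*π*Real.sqrt n) * n := by
                  apply mul_le_mul_of_nonneg_right hsb h0.le
              _ = 2*π*((n:ℝ)*Real.sqrt n) := by ring
          have hQb := Qf_near_bound hn3 hθb
          have hFb := (hdom n (s / (n:ℝ)^((3:ℝ)/2))).trans hQb
          have hexp : -(n:ℝ)^3*(s / (n:ℝ)^((3:ℝ)/2))^2/(162*π^2) = -(1/(162*π^2)) * s^2 := by
            rw [div_pow, rpow32_sq hn1]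
            field_simp
          rw [hexp] at hFb
          exact hFb
    · exact integrable_exp_neg_mul_sq (by positivity)
    · filter_upwards with s
      have hev : ∀ᶠ (n:ℕ) in atTop, G n s = F n (s / (n:ℝ)^((3:ℝ)/2)) := by
        filter_upwards [eventually_gt_atTop (⌈(s/(2*π))^2⌉₊)] with n hn
        have hlt : |s| < 2*π*Real.sqrt n := by
          have h1 : ((s/(2*π))^2 : ℝ) < n := by
            calc ((s/(2*π))^2 : ℝ) ≤ (⌈(s/(2*π))^2⌉₊ : ℝ) := Nat.le_ceil _
              _ < n := by exact_mod_cast hn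
          have h2 : |s/(2*π)| < Real.sqrt n := by
            rw [← Real.sqrt_sq_eq_abs]
            exact Real.sqrt_lt_sqrt (sq_nonneg _) h1
          rw [abs_div, abs_of_pos (by positivity : (0:ℝ) < 2*π), div_lt_iff₀ (by positivity)] at h2
          calc |s| < Real.sqrt n * (2*π) := h2
            _ = 2*π*Real.sqrt n := by ring
        rw [hG]
        apply Set.indicator_of_mem
        rw [abs_lt] at hlt
        exact ⟨hlt.1, hlt.2.le⟩
      have := hpt s
      rw [show Real.exp (-s^2/24) = Real.exp (-(1/24) * s^2) by ring_nf] at this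
      exact this.congr' (by filter_upwards [hev] with n h; exact h.symm)
  exact htend.congr' hstep

lemma tail_zero : Tendsto (fun n : ℕ => 2*π*((n:ℝ)^((3:ℝ)/2) * Real.exp (-(n:ℝ)/8)))
    atTop (nhds 0) := by
  have h1 := tendsto_rpow_mul_exp_neg_mul_atTop_nhds_zero ((3:ℝ)/2) (1/8) (by norm_num)
  have h2 := h1.comp tendsto_natCast_atTop_atTop (α := ℕ)
  have h3 : Tendsto (fun n : ℕ => (n:ℝ)^((3:ℝ)/2) * Real.exp (-(n:ℝ)/8)) atTop (nhds 0) := by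
    apply h2.congr
    intro n
    simp only [Function.comp]
    congr 1
    ring_nf
  have := (tendsto_const_nhds (x := 2*π) (f := atTop (α := ℕ))).mul h3
  simpa using this

lemma full_tendsto (F : ℕ → ℝ → ℝ) (hcont : ∀ n, Continuous (F n))
    (hdom : ∀ n θ, |F n θ| ≤ |Qf n θ|)
    (hpt : ∀ s : ℝ, Tendsto (fun n : ℕ => F n (s / (n:ℝ)^((3:ℝ)/2))) atTop
      (nhds (Real.exp (-s^2/24)))) :
    Tendsto (fun n : ℕ => (n:ℝ)^((3:ℝ)/2) * ∫ θ in (-π)..π, F n θ)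
      atTop (nhds (Real.sqrt (24*π))) := by
  have hπ := Real.pi_pos
  have hmain := main_tendsto F hcont hdom hpt
  have hdiff : Tendsto (fun n : ℕ => (n:ℝ)^((3:ℝ)/2) * (∫ θ in (-π)..π, F n θ)
      - (n:ℝ)^((3:ℝ)/2) * ∫ θ in (-(2*π/(n:ℝ)))..(2*π/(n:ℝ)), F n θ) atTop (nhds 0) := by
    apply squeeze_zero_norm' ?_ tail_zero
    filter_upwards [eventually_ge_atTop 2] with n hn2
    have hn1 : 1 ≤ n := by omega
    have h0 : (0:ℝ) < n := by exact_mod_cast hn1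
    have h2n : (2:ℝ) ≤ n := by exact_mod_cast hn2
    have ha : 2*π/(n:ℝ) ≤ π := by
      rw [div_le_iff₀ h0]
      nlinarith
    have ha0 : (0:ℝ) < 2*π/(n:ℝ) := by positivity
    have hii : ∀ a b : ℝ, IntervalIntegrable (F n) volume a b :=
      fun a b => ((hcont n).intervalIntegrable a b)
    have hsplit : ∫ θ in (-π)..π, F n θ
        = ((∫ θ in (-π)..(-(2*π/(n:ℝ))), F n θ)
          + ∫ θ in (-(2*π/(n:ℝ)))..(2*π/(n:ℝ)), F n θ)
          + ∫ θ in (2*π/(n:ℝ))..π, F n θ := by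
      rw [intervalIntegral.integral_add_adjacent_intervals (hii _ _) (hii _ _),
        intervalIntegral.integral_add_adjacent_intervals (hii _ _) (hii _ _)]
    have hbr : ‖∫ θ in (2*π/(n:ℝ))..π, F n θ‖ ≤ Real.exp (-(n:ℝ)/8) * π := by
      have hb := intervalIntegral.norm_integral_le_of_norm_le_const
        (C := Real.exp (-(n:ℝ)/8)) (f := F n) (a := 2*π/(n:ℝ)) (b := π) ?_
      · refine hb.trans ?_
        have : |π - 2*π/(n:ℝ)| ≤ π := by
          rw [abs_of_nonneg (by linarith)]
          linarith
        exact mul_le_mul_of_nonneg_left this (Real.exp_nonneg _)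
      · intro θ hθ
        rw [Set.uIoc_of_le (by linarith)] at hθ
        have h1 := (hdom n θ).trans (Qf_mid_bound hn1 hθ.1.le hθ.2)
        simpa using h1
    have hbl : ‖∫ θ in (-π)..(-(2*π/(n:ℝ))), F n θ‖ ≤ Real.exp (-(n:ℝ)/8) * π := by
      have hb := intervalIntegral.norm_integral_le_of_norm_le_const
        (C := Real.exp (-(n:ℝ)/8)) (f := F n) (a := -π) (b := -(2*π/(n:ℝ))) ?_
      · refine hb.trans ?_
        have : |-(2*π/(n:ℝ)) - (-π)| ≤ π := by
          rw [abs_of_nonneg (by linarith)]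
          linarith
        exact mul_le_mul_of_nonneg_left this (Real.exp_nonneg _)
      · intro θ hθ
        rw [Set.uIoc_of_le (by linarith)] at hθ
        have hQ : |Qf n θ| = |Qf n (-θ)| := by rw [Qf_even]
        have h1 : |F n θ| ≤ Real.exp (-(n:ℝ)/8) := by
          refine (hdom n θ).trans ?_
          rw [hQ]
          exact Qf_mid_bound hn1 (by linarith [hθ.2]) (by linarith [hθ.1])
        simpa using h1
    rw [hsplit]
    have hc0 : (0:ℝ) ≤ (n:ℝ)^((3:ℝ)/2) := by positivity
    calc ‖(n:ℝ)^((3:ℝ)/2) * (((∫ θ in (-π)..(-(2*π/(n:ℝ))), F n θ)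
          + ∫ θ in (-(2*π/(n:ℝ)))..(2*π/(n:ℝ)), F n θ)
          + ∫ θ in (2*π/(n:ℝ))..π, F n θ)
          - (n:ℝ)^((3:ℝ)/2) * ∫ θ in (-(2*π/(n:ℝ)))..(2*π/(n:ℝ)), F n θ‖
        = ‖(n:ℝ)^((3:ℝ)/2) * ((∫ θ in (-π)..(-(2*π/(n:ℝ))), F n θ)
          + ∫ θ in (2*π/(n:ℝ))..π, F n θ)‖ := by
          congr 1
          ring
      _ ≤ (n:ℝ)^((3:ℝ)/2) * (Real.exp (-(n:ℝ)/8) * π + Real.exp (-(n:ℝ)/8) * π) := by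
          rw [norm_mul, Real.norm_eq_abs ((n:ℝ)^((3:ℝ)/2)), abs_of_nonneg hc0]
          apply mul_le_mul_of_nonneg_left _ hc0
          exact (norm_add_le _ _).trans (add_le_add hbl hbr)
      _ = 2*π*((n:ℝ)^((3:ℝ)/2) * Real.exp (-(n:ℝ)/8)) := by ring
  have h := hdiff.add hmain
  rw [zero_add] at h
  apply h.congr
  intro n
  ring

noncomputable def cseq (n : ℕ) : ℝ := (n*(n+1):ℝ)/4 - (n*(n+1)/2/2 : ℕ)

lemma cseq_bounds (n : ℕ) : 0 ≤ cseq n ∧ cseq n ≤ 1/2 := by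
  have h1 : 4*(n*(n+1)/2/2) ≤ n*(n+1) ∧ n*(n+1) ≤ 4*(n*(n+1)/2/2) + 2 := by
    have he : 2*(n*(n+1)/2) = n*(n+1) :=
      Nat.mul_div_cancel' (even_iff_two_dvd.mp (Nat.even_mul_succ_self n))
    omega
  have h2 : ((n*(n+1):ℕ):ℝ) = (n*(n+1):ℝ) := by push_cast; ring
  have h3 : (4:ℝ)*((n*(n+1)/2/2 : ℕ):ℝ) ≤ (n*(n+1):ℝ) := by
    rw [← h2]; exact_mod_cast h1.1
  have h4 : (n*(n+1):ℝ) ≤ (4:ℝ)*((n*(n+1)/2/2 : ℕ):ℝ) + 2 := by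
    rw [← h2]; exact_mod_cast h1.2
  constructor <;> (rw [cseq]; push_cast at h3 h4 ⊢; linarith)

lemma levelCard_le_int (n m : ℕ) :
    (levelCard n m : ℝ) * (2*π) ≤ 2^n * ∫ θ in (-π)..π, |Qf n θ| := by
  have hπ := Real.pi_pos
  rw [levelCard_eq n m]
  have hint1 : IntervalIntegrable
      (fun θ => Qf n θ * Real.cos (((n*(n+1):ℝ)/4 - m) * θ)) volume (-π) π :=
    ((Qf_continuous n).mul
      (Real.continuous_cos.comp (continuous_const.mul continuous_id))).intervalIntegrable _ _
  have hint2 : IntervalIntegrable (fun θ => |Qf n θ|) volume (-π) π :=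
    ((Qf_continuous n).abs).intervalIntegrable _ _
  have hptle : ∀ θ ∈ Set.Icc (-π) π,
      Qf n θ * Real.cos (((n*(n+1):ℝ)/4 - m) * θ) ≤ |Qf n θ| := by
    intro θ _
    calc Qf n θ * Real.cos (((n*(n+1):ℝ)/4 - m) * θ)
        ≤ |Qf n θ * Real.cos (((n*(n+1):ℝ)/4 - m) * θ)| := le_abs_self _
      _ = |Qf n θ| * |Real.cos (((n*(n+1):ℝ)/4 - m) * θ)| := abs_mul _ _
      _ ≤ |Qf n θ| * 1 := mul_le_mul_of_nonneg_left (Real.abs_cos_le_one _) (abs_nonneg _)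
      _ = |Qf n θ| := mul_one _
  have hle := intervalIntegral.integral_mono_on (by linarith) hint1 hint2 hptle
  exact mul_le_mul_of_nonneg_left hle (by positivity)

/-- Asymptotics of `M n`: `M n = √(6/π) · 2ⁿ / n^{3/2} · (1 + o(1))`,
i.e. `M n · n^{3/2} / 2ⁿ → √(6/π)` as `n → ∞`. -/
theorem stmt16 :
    Filter.Tendsto (fun n : ℕ => (M n : ℝ) * (n : ℝ) ^ ((3 : ℝ) / 2) / 2 ^ n)
      Filter.atTop (nhds (Real.sqrt (6 / Real.pi))) := by
  have hπ := Real.pi_pos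
  have h1n : Tendsto (fun n : ℕ => (1:ℝ)/n) atTop (nhds 0) := tendsto_one_div_atTop_nhds_zero_nat
  -- upper instantiation
  have hJpt : ∀ s:ℝ, Tendsto (fun n : ℕ => |Qf n (s/(n:ℝ)^((3:ℝ)/2))|) atTop
      (nhds (Real.exp (-s^2/24))) := by
    intro s
    have := (continuous_abs.tendsto _).comp (Qf_scaled_tendsto s)
    simpa [Function.comp_def, abs_of_nonneg (Real.exp_nonneg _)] using this
  have hJ := full_tendsto (fun n θ => |Qf n θ|) (fun n => (Qf_continuous n).abs)
    (fun n θ => (abs_abs _).le) hJpt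
  -- lower instantiation
  have hIpt : ∀ s:ℝ, Tendsto (fun n : ℕ =>
      Qf n (s/(n:ℝ)^((3:ℝ)/2)) * Real.cos (cseq n * (s/(n:ℝ)^((3:ℝ)/2)))) atTop
      (nhds (Real.exp (-s^2/24))) := by
    intro s
    have hcos : Tendsto (fun n : ℕ => Real.cos (cseq n * (s/(n:ℝ)^((3:ℝ)/2)))) atTop
        (nhds 1) := by
      have hlow : Tendsto (fun n : ℕ => 1 - s^2/8*(1/(n:ℝ))) atTop (nhds 1) := by
        have := (tendsto_const_nhds (x := (1:ℝ)) (f := atTop (α := ℕ))).sub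
          ((tendsto_const_nhds (x := s^2/8) (f := atTop (α := ℕ))).mul h1n)
        simpa using this
      apply tendsto_of_tendsto_of_tendsto_of_le_of_le' hlow tendsto_const_nhds
      · filter_upwards [eventually_ge_atTop 1] with n hn1
        have h0 : (0:ℝ) < n := by exact_mod_cast hn1
        refine le_trans ?_ Real.one_sub_sq_div_two_le_cos
        have hx2 : (cseq n * (s/(n:ℝ)^((3:ℝ)/2)))^2 ≤ s^2/4*(1/(n:ℝ)) := by
          have hb := cseq_bounds n
          have hcs : (cseq n)^2 ≤ 1/4 := by nlinarith [hb.1, hb.2]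
          have hsq : (s/(n:ℝ)^((3:ℝ)/2))^2 = s^2/(n:ℝ)^3 := by
            rw [div_pow, rpow32_sq hn1]
          have h1 : (1:ℝ) ≤ n := by exact_mod_cast hn1
          have hn3 : (n:ℝ) ≤ (n:ℝ)^3 := by
            have := pow_le_pow_right₀ h1 (show 1 ≤ 3 by norm_num)
            simpa using this
          have hss : s^2/(n:ℝ)^3 ≤ s^2/(n:ℝ) := by
            rw [div_le_div_iff₀ (by positivity) h0]
            nlinarith [mul_le_mul_of_nonneg_left hn3 (sq_nonneg s)]
          calc (cseq n * (s/(n:ℝ)^((3:ℝ)/2)))^2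
              = (cseq n)^2 * (s/(n:ℝ)^((3:ℝ)/2))^2 := by ring
            _ ≤ (1/4) * (s/(n:ℝ)^((3:ℝ)/2))^2 := mul_le_mul_of_nonneg_right hcs (sq_nonneg _)
            _ = (1/4) * (s^2/(n:ℝ)^3) := by rw [hsq]
            _ ≤ (1/4) * (s^2/(n:ℝ)) := by linarith [hss]
            _ = s^2/4*(1/(n:ℝ)) := by ring
        linarith [hx2]
      · filter_upwards with n
        exact Real.cos_le_one _
    have := (Qf_scaled_tendsto s).mul hcos
    simpa using this
  have hI := full_tendsto (fun n θ => Qf n θ * Real.cos (cseq n * θ))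
    (fun n => (Qf_continuous n).mul
      (Real.continuous_cos.comp (continuous_const.mul continuous_id)))
    (fun n θ => by
      rw [abs_mul]
      calc |Qf n θ| * |Real.cos (cseq n * θ)| ≤ |Qf n θ| * 1 :=
            mul_le_mul_of_nonneg_left (Real.abs_cos_le_one _) (abs_nonneg _)
        _ = |Qf n θ| := mul_one _) hIpt
  -- constant identity
  have hconst : Real.sqrt (24*π) / (2*π) = Real.sqrt (6/π) := by
    rw [show (24*π:ℝ) = (6/π)*(2*π)^2 by field_simp; ring,
      Real.sqrt_mul (by positivity) ((2*π)^2), Real.sqrt_sq (by positivity)]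
    field_simp
  have hU : Tendsto (fun n : ℕ => ((n:ℝ)^((3:ℝ)/2) * ∫ θ in (-π)..π, |Qf n θ|)/(2*π))
      atTop (nhds (Real.sqrt (6/π))) := by
    rw [← hconst]; exact hJ.div_const _
  have hL : Tendsto (fun n : ℕ =>
      ((n:ℝ)^((3:ℝ)/2) * ∫ θ in (-π)..π, Qf n θ * Real.cos (cseq n * θ))/(2*π))
      atTop (nhds (Real.sqrt (6/π))) := by
    rw [← hconst]; exact hI.div_const _
  apply tendsto_of_tendsto_of_tendsto_of_le_of_le' hL hU
  · -- lower bound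
    filter_upwards with n
    show ((n:ℝ)^((3:ℝ)/2) * ∫ θ in (-π)..π, Qf n θ * Real.cos (cseq n * θ))/(2*π)
      ≤ (M n : ℝ) * (n:ℝ)^((3:ℝ)/2)/2^n
    have h2pos : (0:ℝ) < 2^n := by positivity
    have heq := levelCard_eq n (n*(n+1)/2/2)
    have hnn : (0:ℝ) ≤ (n:ℝ)^((3:ℝ)/2) := by positivity
    have hfr : ((n*(n+1):ℝ)/4 - ((n*(n+1)/2/2 : ℕ):ℝ)) = cseq n := rfl
    rw [hfr] at heq
    have hInt : ∫ θ in (-π)..π, Qf n θ * Real.cos (cseq n * θ)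
        = (levelCard n (n*(n+1)/2/2) : ℝ) * (2*π)/2^n := by
      rw [eq_div_iff h2pos.ne']
      linarith [heq]
    rw [hInt]
    have hM : (levelCard n (n*(n+1)/2/2) : ℝ) ≤ (M n : ℝ) := by
      exact_mod_cast levelCard_le_M n (n*(n+1)/2/2)
    have hL' : ((n:ℝ)^((3:ℝ)/2) * ((levelCard n (n*(n+1)/2/2):ℝ)*(2*π)/2^n))/(2*π)
        = (levelCard n (n*(n+1)/2/2):ℝ) * (n:ℝ)^((3:ℝ)/2)/2^n := by
      field_simp
    rw [hL']
    gcongr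
  · -- upper bound
    filter_upwards with n
    show (M n : ℝ) * (n:ℝ)^((3:ℝ)/2)/2^n
      ≤ ((n:ℝ)^((3:ℝ)/2) * ∫ θ in (-π)..π, |Qf n θ|)/(2*π)
    obtain ⟨K, hK⟩ := M_exists n
    rw [hK]
    have hle := levelCard_le_int n K
    have hnn : (0:ℝ) ≤ (n:ℝ)^((3:ℝ)/2) := by positivity
    have h2pos : (0:ℝ) < 2^n := by positivity
    rw [div_le_div_iff₀ h2pos (by positivity)]
    nlinarith [mul_le_mul_of_nonneg_left hle hnn]
end
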